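/- arXiv:math/0607521 — 3 statements merged into one kernel-verified Lean document; each statement's English description precedes it below -/
import Mathlib

section
/- Let ω be a symmetric (2,2)-double form on V, let (e₁,…,e_n) be the orthonormal basis of V used in defining the Weitzenböck transformation, and let 1 ≤ p ≤ n. Then N_p(ω)(e₁∧…∧e_p, e₁∧…∧e_p) = Σ_{i=1}^p Σ_{j=p+1}^n ω(e_i∧e_j, e_i∧e_j). -/
open scoped BigOperators RealInnerProductSpace

namespace Weitzenbock

variable (V : Type) [NormedAddCommGroup V] [InnerProductSpace ℝ V]

/-- A "raw" double form of bidegree `(p,q)`: a real-valued function of a `p`-tuple and a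
`q`-tuple of vectors.  A genuine double form (an `ℝ`-bilinear form on `⋀ᵖV × ⋀^qV`) is the
same thing as such a function which is multilinear and alternating in each block of
arguments; this regularity is encoded by the type `DF` below. -/
abbrev DFr (p q : ℕ) : Type _ := (Fin p → V) → (Fin q → V) → ℝ

/-- A double form of bidegree `(p,q)` on `V`: an alternating multilinear map in `p` vector
arguments with values in alternating multilinear maps in `q` vector arguments; this is
exactly the data of a bilinear form `⋀ᵖV × ⋀^qV → ℝ`. -/
abbrev DF (p q : ℕ) : Type _ :=
  AlternatingMap ℝ V (AlternatingMap ℝ V ℝ (Fin q)) (Fin p)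

variable {V}

/-- The underlying raw double form of a double form. -/
def rawDF {p q : ℕ} (ω : DF V p q) : DFr V p q := fun x y => ω x y

/-- Transport a raw double form along equalities of the degrees. -/
def castDF {a b c d : ℕ} (h1 : a = b) (h2 : c = d) (ω : DFr V a c) : DFr V b d :=
  fun x y => ω (fun i => x (Fin.cast h1 i)) (fun j => y (Fin.cast h2 j))

/-- The Kulkarni–Nomizu product of double forms (in raw form):
`(ω₁·ω₂)(x₁∧…∧x_{p+r}, y₁∧…∧y_{q+s}) = (1/(p!r!q!s!)) Σ_{σ,ρ} ε(σ)ε(ρ)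
ω₁(x_{σ(1)}∧…∧x_{σ(p)}, y_{ρ(1)}∧…∧y_{ρ(q)}) ω₂(x_{σ(p+1)}∧…, y_{ρ(q+1)}∧…)`. -/
noncomputable def KN (p r q s : ℕ) (ω₁ : DFr V p q) (ω₂ : DFr V r s) :
    DFr V (p + r) (q + s) := fun x y =>
  ((p.factorial * r.factorial * q.factorial * s.factorial : ℕ) : ℝ)⁻¹ *
    ∑ σ : Equiv.Perm (Fin (p + r)), ∑ ρ : Equiv.Perm (Fin (q + s)),
      ((Equiv.Perm.sign σ : ℤ) : ℝ) * ((Equiv.Perm.sign ρ : ℤ) : ℝ) *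
        (ω₁ (fun a => x (σ (Fin.castAdd r a))) (fun c => y (ρ (Fin.castAdd s c))) *
          ω₂ (fun a => x (σ (Fin.natAdd p a))) (fun c => y (ρ (Fin.natAdd q c))))

/-- The metric `g` as a `(1,1)`-double form. -/
noncomputable def gD : DFr V 1 1 := fun x y => (inner ℝ (x 0) (y 0) : ℝ)

/-- The `k`-th Kulkarni–Nomizu power `g^k` of the metric. -/
noncomputable def gpow : (k : ℕ) → DFr V k k
  | 0 => fun _ _ => 1
  | (k + 1) => KN k 1 k 1 (gpow k) gD

/-- A raw `(p,p)`-double form is symmetric if `ω(u,v) = ω(v,u)`. -/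
def Symm (p : ℕ) (ω : DFr V p p) : Prop := ∀ x y, ω x y = ω y x

/-- The first Bianchi identity for a double form of bidegree `(p, q+1)`:
`Σ_{j=1}^{p+1} (−1)^j ω(x₁∧…∧x̂_j∧…∧x_{p+1}, x_j∧y₁∧…∧y_q) = 0`. -/
def Bianchi (p q : ℕ) (ω : DFr V p (q + 1)) : Prop :=
  ∀ (x : Fin (p + 1) → V) (y : Fin q → V),
    ∑ j : Fin (p + 1),
      (-1 : ℝ) ^ ((j : ℕ) + 1) * ω (j.removeNth x) (Fin.cons (x j) y) = 0

variable {n : ℕ}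

/-- The contraction of a double form with respect to an orthonormal basis:
`cω(x₁∧…∧x_p, y₁∧…∧y_q) = Σ_j ω(e_j∧x₁∧…∧x_p, e_j∧y₁∧…∧y_q)`. -/
noncomputable def contr (b : OrthonormalBasis (Fin n) ℝ V) (p q : ℕ)
    (ω : DFr V (p + 1) (q + 1)) : DFr V p q := fun x y =>
  ∑ j : Fin n, ω (Fin.cons (b j) x) (Fin.cons (b j) y)

/-- Iterated contraction `c^k`. -/
noncomputable def contrIter (b : OrthonormalBasis (Fin n) ℝ V) (p q : ℕ) :
    (k : ℕ) → DFr V (p + k) (q + k) → DFr V p q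
  | 0, ω => ω
  | (k + 1), ω => contrIter b p q k (contr b (p + k) (q + k) ω)

instance (p m : ℕ) : DecidablePred (fun f : Fin p → Fin m => StrictMono f) := fun f =>
  decidable_of_iff (∀ a b : Fin p, a < b → f a < f b)
    ⟨fun h _ _ hab => h _ _ hab, fun h _ _ hab => h hab⟩

/-- The natural inner product of two `(p,q)`-double forms with respect to an orthonormal
basis: `⟨ω₁,ω₂⟩ = Σ_{I,J increasing} ω₁(e_I,e_J) ω₂(e_I,e_J)`. -/
noncomputable def dfInner (b : OrthonormalBasis (Fin n) ℝ V) (p q : ℕ)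
    (ω₁ ω₂ : DFr V p q) : ℝ :=
  ∑ I : {f : Fin p → Fin n // StrictMono f}, ∑ J : {f : Fin q → Fin n // StrictMono f},
    ω₁ (fun a => b (I.1 a)) (fun c => b (J.1 c)) *
      ω₂ (fun a => b (I.1 a)) (fun c => b (J.1 c))

/-- The quadratic form `v ↦ −⟨v,v⟩` on `V`. -/
noncomputable def Qv : QuadraticForm ℝ V :=
  - LinearMap.BilinMap.toQuadraticMap (innerₗ V)

/-- The Clifford algebra of `(V, −⟨·,·⟩)`; via `CliffordAlgebra.equivExterior` it is
identified, as a vector space, with the exterior algebra `ΛV`. -/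
abbrev CA := CliffordAlgebra (Qv (V := V))

/-- A vector of `V` seen inside the Clifford algebra. -/
noncomputable def cvec (v : V) : CA (V := V) := CliffordAlgebra.ι (Qv (V := V)) v

/-- `ad_φ(ψ) = φ·ψ − ψ·φ` (Clifford products). -/
noncomputable def adC (φ ψ : CA (V := V)) : CA (V := V) := φ * ψ - ψ * φ

/-- The identification of the Clifford algebra with the exterior algebra `ΛV`. -/
noncomputable def toExt : CA (V := V) ≃ₗ[ℝ] ExteriorAlgebra ℝ V :=
  CliffordAlgebra.equivExterior (Qv (V := V))

/-- The scalar (degree zero) part of an element of `ΛV ≅ Cl(V)`. -/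
noncomputable def scalarPart (u : CA (V := V)) : ℝ :=
  ExteriorAlgebra.algebraMapInv (toExt u)

/-- The inner product on `ΛV ≅ Cl(V)` for which the wedge products of distinct vectors of
an orthonormal basis are orthonormal: `⟨u,v⟩` is the scalar part of `reverse(involute u)·v`. -/
noncomputable def cinner (u v : CA (V := V)) : ℝ :=
  scalarPart (CliffordAlgebra.reverse (CliffordAlgebra.involute u) * v)

/-- The `p`-vector `x₁ ∧ … ∧ x_p`, viewed in `ΛV ≅ Cl(V)`. -/
noncomputable def wedgeC (p : ℕ) (x : Fin p → V) : CA (V := V) :=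
  toExt.symm (ExteriorAlgebra.ιMulti ℝ p x)

/-- The Weitzenböck transformation of order `p` of a `(2,2)`-double form `ω`, relative to
the orthonormal basis `b`:
`N_p(ω)(ψ₁,ψ₂) = (1/4) Σ_{i<j} Σ_{k<l} ω(e_i∧e_j, e_k∧e_l) ⟨ad_{e_i·e_j}ψ₁, ad_{e_k·e_l}ψ₂⟩`. -/
noncomputable def Nw (b : OrthonormalBasis (Fin n) ℝ V) (p : ℕ) (ω : DFr V 2 2) :
    DFr V p p := fun x y =>
  (4 : ℝ)⁻¹ *
    ∑ i : Fin n, ∑ j : Fin n, ∑ k : Fin n, ∑ l : Fin n,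
      if i < j ∧ k < l then
        ω ![b i, b j] ![b k, b l] *
          cinner (adC (cvec (b i) * cvec (b j)) (wedgeC p x))
            (adC (cvec (b k) * cvec (b l)) (wedgeC p y))
      else 0

/-- A symmetric `(1,1)`-double form is positive definite if it is positive on every
nonzero vector. -/
def posDef11 (F : DFr V 1 1) : Prop := ∀ v : V, v ≠ 0 → 0 < F (fun _ => v) (fun _ => v)

section Aux

variable {n : ℕ} (b : OrthonormalBasis (Fin n) ℝ V)

/-- Clifford product of basis vectors indexed by a list. -/
noncomputable def Pc (l : List (Fin n)) : CA (V := V) :=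
  (l.map (fun i => cvec (b i))).prod

/-- Exterior product of basis vectors indexed by a list. -/
noncomputable def Pe (l : List (Fin n)) : ExteriorAlgebra ℝ V :=
  (l.map (fun i => ExteriorAlgebra.ι ℝ (b i))).prod

lemma Pc_nil : Pc b ([] : List (Fin n)) = 1 := rfl

lemma Pc_cons (a : Fin n) (l : List (Fin n)) :
    Pc b (a :: l) = cvec (b a) * Pc b l := by
  simp [Pc]

lemma Pc_append (l₁ l₂ : List (Fin n)) :
    Pc b (l₁ ++ l₂) = Pc b l₁ * Pc b l₂ := by
  simp [Pc]

lemma Qv_apply (v : V) : Qv v = -(inner ℝ v v : ℝ) := by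
  simp [Qv, LinearMap.BilinMap.toQuadraticMap_apply]

lemma inner_b (i j : Fin n) : (inner ℝ (b i) (b j) : ℝ) = if i = j then 1 else 0 :=
  (orthonormal_iff_ite (𝕜 := ℝ)).mp b.orthonormal i j

lemma cvec_sq (i : Fin n) : cvec (b i) * cvec (b i) = -1 := by
  rw [cvec, CliffordAlgebra.ι_sq_scalar, Qv_apply, inner_b]
  simp

lemma cvec_anticomm {i j : Fin n} (h : i ≠ j) :
    cvec (b i) * cvec (b j) = -(cvec (b j) * cvec (b i)) := by
  have hpolar : QuadraticMap.polar (Qv (V := V)) (b i) (b j) = 0 := by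
    simp only [QuadraticMap.polar, Qv_apply, real_inner_add_add_self]
    rw [show (inner ℝ (b i) (b j) : ℝ) = 0 from by rw [inner_b, if_neg h]]
    ring
  have := CliffordAlgebra.ι_mul_ι_add_swap (Q := Qv (V := V)) (b i) (b j)
  rw [hpolar, map_zero] at this
  exact eq_neg_of_add_eq_zero_left this

/-- The bilinear form used in `equivExterior`. -/
noncomputable def Bf : LinearMap.BilinForm ℝ V :=
  QuadraticMap.associated (R := ℝ) (-(Qv (V := V)))

lemma Bf_apply (v w : V) : Bf v w = (inner ℝ v w : ℝ) := by
  have : -(Qv (V := V)) =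
      LinearMap.BilinMap.toQuadraticMap (innerₗ V) := by
    simp [Qv]
  rw [Bf, this, QuadraticMap.associated_toQuadraticMap]
  have h1 : innerₗ V v w = (inner ℝ v w : ℝ) := rfl
  have h2 : innerₗ V w v = (inner ℝ w v : ℝ) := rfl
  rw [h1, h2, real_inner_comm w v]
  simp [smul_eq_mul]
  ring

lemma Bf_b (i j : Fin n) : Bf (b i) (b j) = if i = j then 1 else 0 := by
  rw [Bf_apply, inner_b]

lemma toExt_apply (x : CA (V := V)) :
    toExt x = CliffordAlgebra.changeForm
      (CliffordAlgebra.changeForm.associated_neg_proof (Q := Qv (V := V))) x := rfl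

lemma toExt_ι_mul (v : V) (x : CA (V := V)) :
    toExt (cvec v * x) = CliffordAlgebra.ι (0 : QuadraticForm ℝ V) v * toExt x -
      CliffordAlgebra.contractLeft (Q := (0 : QuadraticForm ℝ V)) (Bf v) (toExt x) := by
  rw [toExt_apply, toExt_apply]
  exact CliffordAlgebra.changeForm_ι_mul
    (CliffordAlgebra.changeForm.associated_neg_proof (Q := Qv (V := V))) v x

lemma toExt_one : toExt (1 : CA (V := V)) = 1 := by
  rw [toExt_apply]
  exact CliffordAlgebra.changeForm_one
    (CliffordAlgebra.changeForm.associated_neg_proof (Q := Qv (V := V)))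

lemma contract_toExt_Pc {a : Fin n} :
    ∀ {l : List (Fin n)}, a ∉ l →
      CliffordAlgebra.contractLeft (Q := (0 : QuadraticForm ℝ V)) (Bf (b a))
        (toExt (Pc b l)) = 0 := by
  intro l
  induction l with
  | nil =>
      intro _
      rw [Pc_nil, toExt_one, CliffordAlgebra.contractLeft_one]
  | cons c l ih =>
      intro hmem
      have hac : a ≠ c := fun h => hmem (h ▸ List.mem_cons_self)
      have hal : a ∉ l := fun h => hmem (List.mem_cons_of_mem c h)
      rw [Pc_cons, toExt_ι_mul, map_sub, CliffordAlgebra.contractLeft_ι_mul,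
        CliffordAlgebra.contractLeft_comm, Bf_b, if_neg hac, ih hal]
      simp


lemma algebraMapInv_ι (v : V) :
    ExteriorAlgebra.algebraMapInv (ExteriorAlgebra.ι ℝ v) = 0 := by
  simp [ExteriorAlgebra.algebraMapInv]

lemma scalarPart_one : scalarPart (1 : CA (V := V)) = 1 := by
  rw [scalarPart, toExt_one, map_one]

lemma scalarPart_smul (r : ℝ) (x : CA (V := V)) :
    scalarPart (r • x) = r * scalarPart x := by
  rw [scalarPart, scalarPart, map_smul, map_smul, smul_eq_mul]

lemma scalarPart_cvec_mul {a : Fin n} {l : List (Fin n)} (h : a ∉ l) :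
    scalarPart (cvec (b a) * Pc b l) = 0 := by
  rw [scalarPart, toExt_ι_mul, map_sub, contract_toExt_Pc b h, map_zero, sub_zero,
    map_mul]
  have : ExteriorAlgebra.algebraMapInv
      (CliffordAlgebra.ι (0 : QuadraticForm ℝ V) (b a)) = 0 :=
    algebraMapInv_ι (b a)
  rw [this, zero_mul]

lemma neg_one_pow_smul_neg_one_pow_smul (k : ℕ) (x : CA (V := V)) :
    ((-1 : ℝ) ^ k) • ((-1 : ℝ) ^ k) • x = x := by
  rw [smul_smul, ← pow_add, Even.neg_one_pow ⟨k, rfl⟩, one_smul]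

lemma cvec_mul_Pc_of_not_mem {a : Fin n} :
    ∀ {l : List (Fin n)}, a ∉ l →
      cvec (b a) * Pc b l = ((-1 : ℝ) ^ l.length) • (Pc b l * cvec (b a)) := by
  intro l
  induction l with
  | nil => intro _; simp [Pc_nil]
  | cons c l ih =>
      intro hmem
      have hac : a ≠ c := fun h => hmem (h ▸ List.mem_cons_self)
      have hal : a ∉ l := fun h => hmem (List.mem_cons_of_mem c h)
      calc cvec (b a) * Pc b (c :: l)
          = (cvec (b a) * cvec (b c)) * Pc b l := by rw [Pc_cons, mul_assoc]
        _ = -(cvec (b c) * (cvec (b a) * Pc b l)) := by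
              rw [cvec_anticomm b hac, neg_mul, mul_assoc]
        _ = -(cvec (b c) * (((-1 : ℝ) ^ l.length) • (Pc b l * cvec (b a)))) := by
              rw [ih hal]
        _ = (-((-1 : ℝ) ^ l.length)) • (cvec (b c) * (Pc b l * cvec (b a))) := by
              rw [mul_smul_comm, neg_smul]
        _ = ((-1 : ℝ) ^ (c :: l).length) • (Pc b (c :: l) * cvec (b a)) := by
              rw [Pc_cons, mul_assoc, List.length_cons, pow_succ]
              congr 1
              ring

lemma Pc_mul_cvec_of_not_mem {a : Fin n} {l : List (Fin n)} (h : a ∉ l) :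
    Pc b l * cvec (b a) = ((-1 : ℝ) ^ l.length) • (cvec (b a) * Pc b l) := by
  rw [cvec_mul_Pc_of_not_mem b h, neg_one_pow_smul_neg_one_pow_smul]

lemma cvec_mul_Pc_of_mem {a : Fin n} :
    ∀ {l : List (Fin n)}, l.Nodup → a ∈ l →
      cvec (b a) * Pc b l = ((-1 : ℝ) ^ (l.length - 1)) • (Pc b l * cvec (b a)) := by
  intro l
  induction l with
  | nil => intro _ hm; exact absurd hm List.not_mem_nil
  | cons c l ih =>
      intro hnd hmem
      rcases List.mem_cons.mp hmem with hac | hal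
      · subst hac
        have hal : a ∉ l := (List.nodup_cons.mp hnd).1
        have h1 : Pc b (a :: l) * cvec (b a) =
            ((-1 : ℝ) ^ l.length) • (cvec (b a) * (cvec (b a) * Pc b l)) := by
          rw [Pc_cons, mul_assoc, Pc_mul_cvec_of_not_mem b hal, mul_smul_comm]
        rw [List.length_cons, Nat.add_sub_cancel, h1, smul_smul, ← pow_add,
          Even.neg_one_pow ⟨l.length, rfl⟩, one_smul, Pc_cons, ← mul_assoc]
      · have hac : a ≠ c := by
          rintro rfl
          exact (List.nodup_cons.mp hnd).1 hal
        have hnd' : l.Nodup := (List.nodup_cons.mp hnd).2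
        obtain ⟨m, hm⟩ : ∃ m, l.length = m + 1 := by
          rcases l with _ | ⟨x, t⟩
          · exact absurd hal List.not_mem_nil
          · exact ⟨t.length, by simp⟩
        calc cvec (b a) * Pc b (c :: l)
            = (cvec (b a) * cvec (b c)) * Pc b l := by rw [Pc_cons, mul_assoc]
          _ = -(cvec (b c) * (cvec (b a) * Pc b l)) := by
                rw [cvec_anticomm b hac, neg_mul, mul_assoc]
          _ = -(cvec (b c) * (((-1 : ℝ) ^ (l.length - 1)) • (Pc b l * cvec (b a)))) := by
                rw [ih hnd' hal]
          _ = (-((-1 : ℝ) ^ (l.length - 1))) • (cvec (b c) * (Pc b l * cvec (b a))) := by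
                rw [mul_smul_comm, neg_smul]
          _ = ((-1 : ℝ) ^ ((c :: l).length - 1)) • (Pc b (c :: l) * cvec (b a)) := by
                rw [Pc_cons, mul_assoc, List.length_cons, hm]
                congr 1
                simp [pow_succ]

lemma involute_Pc (l : List (Fin n)) :
    CliffordAlgebra.involute (Pc b l) = ((-1 : ℝ) ^ l.length) • Pc b l := by
  induction l with
  | nil => simp [Pc_nil]
  | cons c l ih =>
      rw [Pc_cons, map_mul, ih, show CliffordAlgebra.involute (cvec (b c)) = -cvec (b c)
        from CliffordAlgebra.involute_ι (b c), mul_smul_comm, neg_mul, List.length_cons,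
        pow_succ, ← Pc_cons]
      rw [smul_neg, ← neg_smul]
      congr 1
      ring

lemma reverse_Pc (l : List (Fin n)) :
    CliffordAlgebra.reverse (Pc b l) = Pc b l.reverse := by
  induction l with
  | nil => simp [Pc_nil]
  | cons c l ih =>
      rw [Pc_cons, CliffordAlgebra.reverse.map_mul, ih,
        show CliffordAlgebra.reverse (cvec (b c)) = cvec (b c)
          from CliffordAlgebra.reverse_ι (b c), List.reverse_cons, Pc_append]
      simp [Pc]

lemma cinner_Pc_Pc (u w : List (Fin n)) :
    cinner (Pc b u) (Pc b w) =
      ((-1 : ℝ) ^ u.length) * scalarPart (Pc b (u.reverse ++ w)) := by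
  rw [cinner, involute_Pc, map_smul, reverse_Pc, smul_mul_assoc, scalarPart_smul,
    Pc_append]

lemma cinner_smul_left (r : ℝ) (x y : CA (V := V)) :
    cinner (r • x) y = r * cinner x y := by
  rw [cinner, cinner, map_smul, map_smul, smul_mul_assoc, scalarPart_smul]

lemma cinner_smul_right (r : ℝ) (x y : CA (V := V)) :
    cinner x (r • y) = r * cinner x y := by
  rw [cinner, cinner, mul_smul_comm, scalarPart_smul]

lemma cinner_zero_left (y : CA (V := V)) : cinner 0 y = 0 := by
  have := cinner_smul_left (0 : ℝ) (0 : CA (V := V)) y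
  simpa using this

lemma cinner_zero_right (y : CA (V := V)) : cinner y 0 = 0 := by
  have := cinner_smul_right (0 : ℝ) y (0 : CA (V := V))
  simpa using this

lemma Pc_reverse_mul_self (w : List (Fin n)) :
    Pc b w.reverse * Pc b w = ((-1 : ℝ) ^ w.length) • 1 := by
  induction w with
  | nil => simp [Pc_nil]
  | cons c w ih =>
      rw [List.reverse_cons, Pc_append, Pc_cons, Pc_cons, Pc_nil, mul_one]
      rw [show Pc b w.reverse * cvec (b c) * (cvec (b c) * Pc b w)
          = Pc b w.reverse * (cvec (b c) * cvec (b c)) * Pc b w by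
        rw [mul_assoc, mul_assoc, mul_assoc]]
      rw [cvec_sq, mul_neg_one, neg_mul, ih, List.length_cons, pow_succ, ← neg_smul]
      congr 1
      ring

lemma cinner_Pc_self (w : List (Fin n)) : cinner (Pc b w) (Pc b w) = 1 := by
  rw [cinner_Pc_Pc, Pc_append, Pc_reverse_mul_self, scalarPart_smul, scalarPart_one,
    mul_one, ← pow_add, Even.neg_one_pow ⟨w.length, rfl⟩]

lemma scalarPart_Pc_count_one {a : Fin n} {m : List (Fin n)} (h : m.count a = 1) :
    scalarPart (Pc b m) = 0 := by
  have hmem : a ∈ m := List.count_pos_iff.mp (by omega)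
  obtain ⟨m₁, m₂, rfl⟩ := List.append_of_mem hmem
  rw [List.count_append, List.count_cons_self] at h
  have h₁ : a ∉ m₁ := List.count_eq_zero.mp (by omega)
  have h₂ : a ∉ m₂ := List.count_eq_zero.mp (by omega)
  have key : Pc b (m₁ ++ a :: m₂) = ((-1 : ℝ) ^ m₁.length) • (cvec (b a) * Pc b (m₁ ++ m₂)) := by
    rw [Pc_append, Pc_cons, ← mul_assoc, Pc_mul_cvec_of_not_mem b h₁, smul_mul_assoc,
      mul_assoc, ← Pc_append]
  rw [key, scalarPart_smul, scalarPart_cvec_mul b (by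
    simp only [List.mem_append] at *
    tauto), mul_zero]

lemma toExt_Pc_nodup : ∀ {l : List (Fin n)}, l.Nodup → toExt (Pc b l) = Pe b l := by
  intro l
  induction l with
  | nil => intro _; rw [Pc_nil, toExt_one]; rfl
  | cons c l ih =>
      intro hnd
      have hcl : c ∉ l := (List.nodup_cons.mp hnd).1
      rw [Pc_cons, toExt_ι_mul, contract_toExt_Pc b hcl, sub_zero, ih (List.nodup_cons.mp hnd).2]
      rfl

lemma L_nodup {p : ℕ} (hpn : p ≤ n) : ((List.finRange p).map (Fin.castLE hpn)).Nodup :=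
  (List.nodup_finRange p).map (Fin.castLE_injective hpn)

lemma mem_L {p : ℕ} (hpn : p ≤ n) (a : Fin n) :
    a ∈ (List.finRange p).map (Fin.castLE hpn) ↔ (a : ℕ) < p := by
  simp only [List.mem_map, List.mem_finRange, true_and]
  constructor
  · rintro ⟨x, rfl⟩; exact x.isLt
  · intro h; exact ⟨⟨(a : ℕ), h⟩, Fin.ext rfl⟩

lemma L_length {p : ℕ} (hpn : p ≤ n) :
    ((List.finRange p).map (Fin.castLE hpn)).length = p := by simp

lemma wedgeC_eq {p : ℕ} (hpn : p ≤ n) :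
    wedgeC p (fun a => b (Fin.castLE hpn a)) =
      Pc b ((List.finRange p).map (Fin.castLE hpn)) := by
  rw [wedgeC, ExteriorAlgebra.ιMulti_apply, LinearEquiv.symm_apply_eq,
    toExt_Pc_nodup b (L_nodup hpn), Pe, List.ofFn_eq_map, List.map_map]
  rfl

lemma cvec_cvec_mul_Pc {i j : Fin n} {l : List (Fin n)} {s t : ℝ}
    (hi : cvec (b i) * Pc b l = s • (Pc b l * cvec (b i)))
    (hj : cvec (b j) * Pc b l = t • (Pc b l * cvec (b j))) :
    cvec (b i) * cvec (b j) * Pc b l = (s * t) • (Pc b l * (cvec (b i) * cvec (b j))) := by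
  calc cvec (b i) * cvec (b j) * Pc b l
      = cvec (b i) * (cvec (b j) * Pc b l) := by rw [mul_assoc]
    _ = cvec (b i) * (t • (Pc b l * cvec (b j))) := by rw [hj]
    _ = t • ((cvec (b i) * Pc b l) * cvec (b j)) := by
          rw [mul_smul_comm]; congr 1; noncomm_ring
    _ = t • ((s • (Pc b l * cvec (b i))) * cvec (b j)) := by rw [hi]
    _ = (s * t) • (Pc b l * (cvec (b i) * cvec (b j))) := by
          rw [smul_mul_assoc, smul_smul, mul_comm t s]
          congr 1
          noncomm_ring

lemma adC_eq_zero_of_sign_one {i j : Fin n} {l : List (Fin n)}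
    (h : cvec (b i) * cvec (b j) * Pc b l = Pc b l * (cvec (b i) * cvec (b j))) :
    adC (cvec (b i) * cvec (b j)) (Pc b l) = 0 := by
  rw [adC, h, sub_self]

lemma adC_Pc_both_not_mem {i j : Fin n} {l : List (Fin n)}
    (hi : i ∉ l) (hj : j ∉ l) :
    adC (cvec (b i) * cvec (b j)) (Pc b l) = 0 := by
  apply adC_eq_zero_of_sign_one
  rw [cvec_cvec_mul_Pc b (cvec_mul_Pc_of_not_mem b hi) (cvec_mul_Pc_of_not_mem b hj),
    ← pow_add, Even.neg_one_pow ⟨l.length, rfl⟩, one_smul]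

lemma adC_Pc_both_mem {i j : Fin n} {l : List (Fin n)} (hnd : l.Nodup)
    (hi : i ∈ l) (hj : j ∈ l) :
    adC (cvec (b i) * cvec (b j)) (Pc b l) = 0 := by
  apply adC_eq_zero_of_sign_one
  rw [cvec_cvec_mul_Pc b (cvec_mul_Pc_of_mem b hnd hi) (cvec_mul_Pc_of_mem b hnd hj),
    ← pow_add, Even.neg_one_pow ⟨l.length - 1, rfl⟩, one_smul]

lemma adC_Pc_mixed {i j : Fin n} {l : List (Fin n)} (hnd : l.Nodup)
    (hi : i ∈ l) (hj : j ∉ l) :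
    adC (cvec (b i) * cvec (b j)) (Pc b l) =
      (2 : ℝ) • (cvec (b i) * cvec (b j) * Pc b l) := by
  have hlen : 1 ≤ l.length := by
    rcases l with _ | ⟨x, t⟩
    · exact absurd hi List.not_mem_nil
    · simp
  have h := cvec_cvec_mul_Pc b (cvec_mul_Pc_of_mem b hnd hi) (cvec_mul_Pc_of_not_mem b hj)
  rw [← pow_add, Odd.neg_one_pow ⟨l.length - 1, by omega⟩] at h
  have h' : Pc b l * (cvec (b i) * cvec (b j)) =
      (-1 : ℝ) • (cvec (b i) * cvec (b j) * Pc b l) := by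
    rw [h, smul_smul]
    norm_num
  rw [adC, h', neg_one_smul, sub_neg_eq_add, two_smul ℝ]

lemma cvec_mul_Pc_split {i : Fin n} {L₁ L₂ : List (Fin n)} (h₁ : i ∉ L₁) :
    cvec (b i) * Pc b (L₁ ++ i :: L₂) = (-((-1 : ℝ) ^ L₁.length)) • Pc b (L₁ ++ L₂) := by
  calc cvec (b i) * Pc b (L₁ ++ i :: L₂)
      = (cvec (b i) * Pc b L₁) * (cvec (b i) * Pc b L₂) := by
        rw [Pc_append, Pc_cons]; noncomm_ring
    _ = (((-1:ℝ)^L₁.length) • (Pc b L₁ * cvec (b i))) * (cvec (b i) * Pc b L₂) := by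
        rw [cvec_mul_Pc_of_not_mem b h₁]
    _ = ((-1:ℝ)^L₁.length) • (Pc b L₁ * ((cvec (b i) * cvec (b i)) * Pc b L₂)) := by
        rw [smul_mul_assoc]; congr 1; noncomm_ring
    _ = (-((-1:ℝ)^L₁.length)) • Pc b (L₁ ++ L₂) := by
        rw [cvec_sq, neg_one_mul, mul_neg, smul_neg, ← neg_smul, Pc_append]

lemma cvec_cvec_Pc_split {i j : Fin n} (hij : i ≠ j) {L₁ L₂ : List (Fin n)}
    (h₁ : i ∉ L₁) :
    cvec (b i) * cvec (b j) * Pc b (L₁ ++ i :: L₂) =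
      ((-1 : ℝ) ^ L₁.length) • Pc b (j :: (L₁ ++ L₂)) := by
  calc cvec (b i) * cvec (b j) * Pc b (L₁ ++ i :: L₂)
      = -(cvec (b j) * (cvec (b i) * Pc b (L₁ ++ i :: L₂))) := by
        rw [cvec_anticomm b hij, neg_mul, mul_assoc]
    _ = -(cvec (b j) * ((-((-1:ℝ)^L₁.length)) • Pc b (L₁ ++ L₂))) := by
        rw [cvec_mul_Pc_split b h₁]
    _ = ((-1:ℝ)^L₁.length) • Pc b (j :: (L₁ ++ L₂)) := by
        rw [mul_smul_comm, neg_smul, neg_neg, Pc_cons]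

lemma cinner_term {p : ℕ} (hpn : p ≤ n) (i j k l : Fin n)
    (hij : i < j) (hkl : k < l) :
    cinner (adC (cvec (b i) * cvec (b j)) (Pc b ((List.finRange p).map (Fin.castLE hpn))))
      (adC (cvec (b k) * cvec (b l)) (Pc b ((List.finRange p).map (Fin.castLE hpn)))) =
    if i = k ∧ j = l ∧ (i : ℕ) < p ∧ p ≤ (j : ℕ) then 4 else 0 := by
  set L := (List.finRange p).map (Fin.castLE hpn) with hLdef
  have hnd : L.Nodup := L_nodup hpn
  have hmem : ∀ a : Fin n, a ∈ L ↔ (a : ℕ) < p := mem_L hpn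
  by_cases hside1 : (i : ℕ) < p ∧ p ≤ (j : ℕ)
  case neg =>
    have h0 : adC (cvec (b i) * cvec (b j)) (Pc b L) = 0 := by
      rcases Nat.lt_or_ge (i : ℕ) p with hi | hi
      · have hj : (j : ℕ) < p := by omega
        exact adC_Pc_both_mem b hnd ((hmem i).mpr hi) ((hmem j).mpr hj)
      · have hj : ¬(j : ℕ) < p := by
          have : (i : ℕ) < (j : ℕ) := hij
          omega
        exact adC_Pc_both_not_mem b (fun h => by have := (hmem i).mp h; omega)
          (fun h => hj ((hmem j).mp h))
    rw [h0, cinner_zero_left, if_neg (by tauto)]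
  case pos =>
  obtain ⟨hi, hj⟩ := hside1
  by_cases hside2 : (k : ℕ) < p ∧ p ≤ (l : ℕ)
  case neg =>
    have h0 : adC (cvec (b k) * cvec (b l)) (Pc b L) = 0 := by
      rcases Nat.lt_or_ge (k : ℕ) p with hk | hk
      · have hl : (l : ℕ) < p := by omega
        exact adC_Pc_both_mem b hnd ((hmem k).mpr hk) ((hmem l).mpr hl)
      · have hl : ¬(l : ℕ) < p := by
          have : (k : ℕ) < (l : ℕ) := hkl
          omega
        exact adC_Pc_both_not_mem b (fun h => by have := (hmem k).mp h; omega)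
          (fun h => hl ((hmem l).mp h))
    rw [h0, cinner_zero_right, if_neg ?_]
    rintro ⟨rfl, rfl, h3, h4⟩
    exact hside2 ⟨h3, h4⟩
  case pos =>
  obtain ⟨hk, hl⟩ := hside2
  have hiL : i ∈ L := (hmem i).mpr hi
  have hjL : j ∉ L := fun h => by have := (hmem j).mp h; omega
  have hkL : k ∈ L := (hmem k).mpr hk
  have hlL : l ∉ L := fun h => by have := (hmem l).mp h; omega
  have hij' : i ≠ j := fun h => by rw [h] at hi; omega
  have hkl' : k ≠ l := fun h => by rw [h] at hk; omega
  rw [adC_Pc_mixed b hnd hiL hjL, adC_Pc_mixed b hnd hkL hlL, cinner_smul_left,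
    cinner_smul_right]
  by_cases hdiag : i = k ∧ j = l
  · obtain ⟨hik, hjl⟩ := hdiag
    rw [if_pos ⟨hik, hjl, hi, hj⟩]
    subst hik
    subst hjl
    obtain ⟨L₁, L₂, hLsplit⟩ := List.append_of_mem hiL
    have hm1 : (i :: (L₁ ++ L₂)).Nodup := List.nodup_middle.mp (hLsplit ▸ hnd)
    have hiL₁ : i ∉ L₁ := fun h =>
      (List.nodup_cons.mp hm1).1 (List.mem_append.mpr (Or.inl h))
    have e1 : cvec (b i) * cvec (b j) * Pc b L =
        ((-1 : ℝ) ^ L₁.length) • Pc b (j :: (L₁ ++ L₂)) := by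
      rw [hLsplit]
      exact cvec_cvec_Pc_split b hij' hiL₁
    rw [e1, cinner_smul_left, cinner_smul_right, cinner_Pc_self]
    rw [show ((-1 : ℝ) ^ L₁.length) * (((-1 : ℝ) ^ L₁.length) * 1) = 1 from by
      rw [mul_one, ← pow_add]; exact Even.neg_one_pow ⟨_, rfl⟩]
    norm_num
  · rw [if_neg (by tauto)]
    obtain ⟨L₁, L₂, hLsplit⟩ := List.append_of_mem hiL
    obtain ⟨K₁, K₂, hKsplit⟩ := List.append_of_mem hkL
    have hm1 : (i :: (L₁ ++ L₂)).Nodup := List.nodup_middle.mp (hLsplit ▸ hnd)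
    have hm2 : (k :: (K₁ ++ K₂)).Nodup := List.nodup_middle.mp (hKsplit ▸ hnd)
    have hiL₁₂ : i ∉ L₁ ++ L₂ := (List.nodup_cons.mp hm1).1
    have hkK₁₂ : k ∉ K₁ ++ K₂ := (List.nodup_cons.mp hm2).1
    have hiL₁ : i ∉ L₁ := fun h => hiL₁₂ (List.mem_append.mpr (Or.inl h))
    have hkK₁ : k ∉ K₁ := fun h => hkK₁₂ (List.mem_append.mpr (Or.inl h))
    have e1 : cvec (b i) * cvec (b j) * Pc b L =
        ((-1 : ℝ) ^ L₁.length) • Pc b (j :: (L₁ ++ L₂)) := by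
      rw [hLsplit]
      exact cvec_cvec_Pc_split b hij' hiL₁
    have e2 : cvec (b k) * cvec (b l) * Pc b L =
        ((-1 : ℝ) ^ K₁.length) • Pc b (l :: (K₁ ++ K₂)) := by
      rw [hKsplit]
      exact cvec_cvec_Pc_split b hkl' hkK₁
    have hzero : scalarPart
        (Pc b ((j :: (L₁ ++ L₂)).reverse ++ (l :: (K₁ ++ K₂)))) = 0 := by
      by_cases hjl : j = l
      · subst hjl
        have hik : i ≠ k := fun h => hdiag ⟨h, rfl⟩
        have hjk : (j == k) = false := by
          refine beq_false_of_ne (fun h => ?_)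
          rw [h] at hj
          omega
        have hkL₁₂ : (L₁ ++ L₂).count k = 1 := by
          apply List.count_eq_one_of_mem (List.nodup_cons.mp hm1).2
          have hmm : k ∈ L := hkL
          rw [hLsplit] at hmm
          rcases List.mem_append.mp hmm with h' | h'
          · exact List.mem_append.mpr (Or.inl h')
          · rcases List.mem_cons.mp h' with h' | h'
            · exact absurd h'.symm hik
            · exact List.mem_append.mpr (Or.inr h')
        apply scalarPart_Pc_count_one b (a := k)
        rw [List.count_append, List.count_reverse, List.count_cons, List.count_cons,
          hkL₁₂, List.count_eq_zero.mpr hkK₁₂, hjk]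
        simp
      · have hlj : (l == j) = false := beq_false_of_ne (fun h => hjl h.symm)
        have hjj : (j == j) = true := beq_self_eq_true j
        have hjL₁₂ : (L₁ ++ L₂).count j = 0 := by
          refine List.count_eq_zero.mpr (fun h => hjL ?_)
          rw [hLsplit]
          rcases List.mem_append.mp h with h' | h'
          · exact List.mem_append.mpr (Or.inl h')
          · exact List.mem_append.mpr (Or.inr (List.mem_cons_of_mem _ h'))
        have hjK₁₂ : (K₁ ++ K₂).count j = 0 := by
          refine List.count_eq_zero.mpr (fun h => hjL ?_)
          rw [hKsplit]
          rcases List.mem_append.mp h with h' | h'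
          · exact List.mem_append.mpr (Or.inl h')
          · exact List.mem_append.mpr (Or.inr (List.mem_cons_of_mem _ h'))
        apply scalarPart_Pc_count_one b (a := j)
        rw [List.count_append, List.count_reverse, List.count_cons, List.count_cons,
          hjL₁₂, hjK₁₂, hlj, hjj]
        simp
    rw [e1, e2, cinner_smul_left, cinner_smul_right, cinner_Pc_Pc, hzero]
    norm_num

end Aux
variable (V)

/-- Sectional curvature of the Weitzenböck transformation:
`N_p(ω)(e₁∧…∧e_p, e₁∧…∧e_p) = Σ_{i=1}^p Σ_{j=p+1}^n ω(e_i∧e_j, e_i∧e_j)`. -/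
theorem weitzenbock_sectional (n : ℕ) (b : OrthonormalBasis (Fin n) ℝ V)
    (ω : DF V 2 2) (hsym : Symm 2 (rawDF ω))
    (p : ℕ) (hp1 : 1 ≤ p) (hpn : p ≤ n) :
    Nw b p (rawDF ω) (fun a => b (Fin.castLE hpn a)) (fun a => b (Fin.castLE hpn a)) =
      ∑ i : Fin n, ∑ j : Fin n,
        if (i : ℕ) < p ∧ p ≤ (j : ℕ) then rawDF ω ![b i, b j] ![b i, b j] else 0 := by
  classical
  simp only [Nw]
  rw [wedgeC_eq b hpn]
  have hterm : ∀ i j k l : Fin n,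
      (if i < j ∧ k < l then
          rawDF ω ![b i, b j] ![b k, b l] *
            cinner
              (adC (cvec (b i) * cvec (b j))
                (Pc b ((List.finRange p).map (Fin.castLE hpn))))
              (adC (cvec (b k) * cvec (b l))
                (Pc b ((List.finRange p).map (Fin.castLE hpn))))
        else 0) =
      (if i = k ∧ j = l ∧ (i : ℕ) < p ∧ p ≤ (j : ℕ) then
          4 * rawDF ω ![b i, b j] ![b i, b j] else 0) := by
    intro i j k l
    by_cases h : i < j ∧ k < l
    · rw [if_pos h, cinner_term b hpn i j k l h.1 h.2]
      by_cases hc : i = k ∧ j = l ∧ (i : ℕ) < p ∧ p ≤ (j : ℕ)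
      · rw [if_pos hc, if_pos hc]
        obtain ⟨rfl, rfl, -⟩ := hc
        ring
      · rw [if_neg hc, if_neg hc, mul_zero]
    · rw [if_neg h]
      refine (if_neg (fun hc => h ?_)).symm
      obtain ⟨rfl, rfl, h3, h4⟩ := hc
      have hij : i < j := by
        rw [Fin.lt_def]
        omega
      exact ⟨hij, hij⟩
  simp only [hterm]
  have hcol : ∀ i j : Fin n,
      (∑ k : Fin n, ∑ l : Fin n,
        if i = k ∧ j = l ∧ (i : ℕ) < p ∧ p ≤ (j : ℕ) then
          4 * rawDF ω ![b i, b j] ![b i, b j] else 0) =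
      (if (i : ℕ) < p ∧ p ≤ (j : ℕ) then 4 * rawDF ω ![b i, b j] ![b i, b j] else 0) := by
    intro i j
    have hsplit : ∀ k l : Fin n,
        (if i = k ∧ j = l ∧ (i : ℕ) < p ∧ p ≤ (j : ℕ) then
            4 * rawDF ω ![b i, b j] ![b i, b j] else 0) =
        (if i = k then if j = l then
            (if (i : ℕ) < p ∧ p ≤ (j : ℕ) then
              4 * rawDF ω ![b i, b j] ![b i, b j] else 0)
          else 0 else 0) := by
      intro k l
      by_cases h1 : i = k <;> by_cases h2 : j = l <;> simp [h1, h2]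
    simp only [hsplit]
    simp [Finset.sum_ite_eq]
  simp only [hcol]
  have hpull : ∀ i j : Fin n,
      (if (i : ℕ) < p ∧ p ≤ (j : ℕ) then 4 * rawDF ω ![b i, b j] ![b i, b j] else 0) =
      4 * (if (i : ℕ) < p ∧ p ≤ (j : ℕ) then rawDF ω ![b i, b j] ![b i, b j] else 0) := by
    intro i j
    split_ifs <;> simp
  simp only [hpull, ← Finset.mul_sum]
  ring

end Weitzenbock
end

section
/- Let ω be a symmetric (2,2)-double form on V, let 2 ≤ p ≤ n, and let (e₁,…,e_n) be an orthonormal basis of V. Then Σ_{i=1}^p Σ_{j=p+1}^n ω(e_i∧e_j, e_i∧e_j) = (g^{p−1}·(cω)/(p−1)! − 2 g^{p−2}·ω/(p−2)!)(e₁∧…∧e_p, e₁∧…∧e_p), where the products are Kulkarni–Nomizu products. -/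
open scoped BigOperators RealInnerProductSpace

namespace Weitzenbock

variable (V : Type) [NormedAddCommGroup V] [InnerProductSpace ℝ V]

variable {V}

variable {n : ℕ}

/-- real-valued sign -/
noncomputable def sgn {m : ℕ} (σ : Equiv.Perm (Fin m)) : ℝ :=
  ((Equiv.Perm.sign σ : ℤ) : ℝ)

lemma sgn_mul {m : ℕ} (σ τ : Equiv.Perm (Fin m)) : sgn (σ * τ) = sgn σ * sgn τ := by
  simp [sgn]

lemma sgn_sq {m : ℕ} (σ : Equiv.Perm (Fin m)) : sgn σ * sgn σ = 1 := by
  simp [sgn, ← Int.cast_mul, ← Units.val_mul, Int.units_mul_self]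

lemma sgn_inv {m : ℕ} (σ : Equiv.Perm (Fin m)) : sgn σ⁻¹ = sgn σ := by
  simp [sgn]

def ext1 {k r : ℕ} (τ : Equiv.Perm (Fin k)) : Equiv.Perm (Fin (k + r)) :=
  finSumFinEquiv.permCongr (Equiv.sumCongr τ (Equiv.refl (Fin r)))

def ext2 {k r : ℕ} (μ : Equiv.Perm (Fin r)) : Equiv.Perm (Fin (k + r)) :=
  finSumFinEquiv.permCongr (Equiv.sumCongr (Equiv.refl (Fin k)) μ)

lemma ext1_castAdd {k r : ℕ} (τ : Equiv.Perm (Fin k)) (i : Fin k) :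
    ext1 (r := r) τ (Fin.castAdd r i) = Fin.castAdd r (τ i) := by
  rw [ext1, ← finSumFinEquiv_apply_left (n := r) i, Equiv.permCongr_apply,
    Equiv.symm_apply_apply]
  simp

lemma ext1_natAdd {k r : ℕ} (τ : Equiv.Perm (Fin k)) (c : Fin r) :
    ext1 (r := r) τ (Fin.natAdd k c) = Fin.natAdd k c := by
  rw [ext1, ← finSumFinEquiv_apply_right (m := k) c, Equiv.permCongr_apply,
    Equiv.symm_apply_apply]
  simp

lemma ext2_castAdd {k r : ℕ} (μ : Equiv.Perm (Fin r)) (i : Fin k) :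
    ext2 (k := k) μ (Fin.castAdd r i) = Fin.castAdd r i := by
  rw [ext2, ← finSumFinEquiv_apply_left (n := r) i, Equiv.permCongr_apply,
    Equiv.symm_apply_apply]
  simp

lemma ext2_natAdd {k r : ℕ} (μ : Equiv.Perm (Fin r)) (c : Fin r) :
    ext2 (k := k) μ (Fin.natAdd k c) = Fin.natAdd k (μ c) := by
  rw [ext2, ← finSumFinEquiv_apply_right (m := k) c, Equiv.permCongr_apply,
    Equiv.symm_apply_apply]
  simp

lemma ext1_inv_castAdd {k r : ℕ} (τ : Equiv.Perm (Fin k)) (i : Fin k) :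
    (ext1 (r := r) τ)⁻¹ (Fin.castAdd r (τ i)) = Fin.castAdd r i := by
  rw [← ext1_castAdd τ i]; exact Equiv.symm_apply_apply _ _

lemma ext1_inv_natAdd {k r : ℕ} (τ : Equiv.Perm (Fin k)) (c : Fin r) :
    (ext1 (r := r) τ)⁻¹ (Fin.natAdd k c) = Fin.natAdd k c := by
  conv_lhs => rw [← ext1_natAdd τ c]
  exact Equiv.symm_apply_apply _ _

lemma sgn_ext1 {k r : ℕ} (τ : Equiv.Perm (Fin k)) : sgn (ext1 (r := r) τ) = sgn τ := by
  rw [sgn, ext1, Equiv.Perm.sign_permCongr, Equiv.Perm.sign_sumCongr]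
  simp [sgn]

lemma sgn_ext2 {k r : ℕ} (μ : Equiv.Perm (Fin r)) : sgn (ext2 (k := k) μ) = sgn μ := by
  rw [sgn, ext2, Equiv.Perm.sign_permCongr, Equiv.Perm.sign_sumCongr]
  simp [sgn]

lemma exists_ext2 {k r : ℕ} (ν : Equiv.Perm (Fin (k + r)))
    (hν : ∀ i : Fin k, ν (Fin.castAdd r i) = Fin.castAdd r i) :
    ∃ μ : Equiv.Perm (Fin r), ν = ext2 μ := by
  have hval : ∀ c : Fin r, k ≤ (ν (Fin.natAdd k c)).val := by
    intro c
    by_contra h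
    push_neg at h
    have h1 : ν (Fin.castAdd r ⟨(ν (Fin.natAdd k c)).val, h⟩) = ν (Fin.natAdd k c) := by
      rw [hν]; apply Fin.ext; rfl
    have h2 := congrArg Fin.val (ν.injective h1)
    simp only [Fin.coe_castAdd, Fin.coe_natAdd] at h2
    omega
  have hlt : ∀ c : Fin r, (ν (Fin.natAdd k c)).val - k < r := by
    intro c; have := (ν (Fin.natAdd k c)).isLt; have := c.isLt; omega
  set m : Fin r → Fin r := fun c => ⟨(ν (Fin.natAdd k c)).val - k, hlt c⟩ with hmdef
  have hm : ∀ c, ν (Fin.natAdd k c) = Fin.natAdd k (m c) := by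
    intro c
    have := hval c
    apply Fin.ext
    show (ν (Fin.natAdd k c)).val = k + ((ν (Fin.natAdd k c)).val - k)
    omega
  have hminj : Function.Injective m := by
    intro c c' h
    have h1 : ν (Fin.natAdd k c) = ν (Fin.natAdd k c') := by rw [hm, hm, h]
    have h2 := congrArg Fin.val (ν.injective h1)
    simp only [Fin.coe_natAdd] at h2
    exact Fin.ext (by omega)
  refine ⟨Equiv.ofBijective m (Finite.injective_iff_bijective.mp hminj), ?_⟩
  ext v
  induction v using Fin.addCases with
  | left i => rw [hν, ext2_castAdd]
  | right c => rw [hm, ext2_natAdd]; rfl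


/-- product reindexing along blocks -/
lemma prod_blocks {k r : ℕ} (σ : Equiv.Perm (Fin (k + r))) (f : Fin (k + r) → ℝ) :
    (∏ j, f j) = (∏ i : Fin k, f (σ (Fin.castAdd r i))) * ∏ c : Fin r, f (σ (Fin.natAdd k c)) := by
  rw [← Equiv.prod_comp σ f, ← Equiv.prod_comp finSumFinEquiv (fun j => f (σ j)),
    Fintype.prod_sum_type]
  simp

lemma sgn_def {m : ℕ} (σ : Equiv.Perm (Fin m)) :
    ((Equiv.Perm.sign σ : ℤ) : ℝ) = sgn σ := rfl

lemma sgn_sq' {m : ℕ} (σ : Equiv.Perm (Fin m)) : sgn σ ^ 2 = 1 := by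
  rw [pow_two, sgn_sq]

/-- `gpow` as a sum over permutations -/
lemma gpow_eq (k : ℕ) : ∀ x y : Fin k → V,
    gpow k x y = (k.factorial : ℝ) *
      ∑ π : Equiv.Perm (Fin k), sgn π * ∏ i, (inner ℝ (x i) (y (π i)) : ℝ) := by
  induction k with
  | zero =>
    intro x y
    simp [gpow, sgn]
  | succ k ih =>
    intro x y
    have inner_eq : ∀ (σ : Equiv.Perm (Fin (k + 1))) (τ : Equiv.Perm (Fin k)),
        (∑ ρ : Equiv.Perm (Fin (k + 1)), sgn σ * sgn ρ * sgn τ *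
          ((∏ i, (inner ℝ (x (σ (Fin.castAdd 1 i))) (y (ρ (Fin.castAdd 1 (τ i)))) : ℝ)) *
            (inner ℝ (x (σ (Fin.natAdd k 0))) (y (ρ (Fin.natAdd k 0))) : ℝ)))
        = ∑ π : Equiv.Perm (Fin (k + 1)), sgn π * ∏ j, (inner ℝ (x j) (y (π j)) : ℝ) := by
      intro σ τ
      rw [← Equiv.sum_comp (Equiv.mulRight (σ * (ext1 (r := 1) τ)⁻¹))
        (fun ρ => sgn σ * sgn ρ * sgn τ *
          ((∏ i, (inner ℝ (x (σ (Fin.castAdd 1 i))) (y (ρ (Fin.castAdd 1 (τ i)))) : ℝ)) *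
            (inner ℝ (x (σ (Fin.natAdd k 0))) (y (ρ (Fin.natAdd k 0))) : ℝ)))]
      refine Finset.sum_congr rfl fun π _ => ?_
      simp only [Equiv.coe_mulRight, Equiv.Perm.mul_apply, ext1_inv_castAdd,
        ext1_inv_natAdd, sgn_mul, sgn_inv, sgn_ext1]
      rw [prod_blocks σ (fun j => (inner ℝ (x j) (y (π j)) : ℝ)), Fin.prod_univ_one]
      ring_nf
      simp [sgn_sq']
    show KN k 1 k 1 (gpow k) gD x y = _
    simp only [KN, gD, ih, sgn_def]
    have big : ∀ σ : Equiv.Perm (Fin (k + 1)),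
        (∑ ρ : Equiv.Perm (Fin (k + 1)), sgn σ * sgn ρ *
          (((k.factorial : ℝ) * ∑ τ : Equiv.Perm (Fin k), sgn τ *
              ∏ i, (inner ℝ (x (σ (Fin.castAdd 1 i))) (y (ρ (Fin.castAdd 1 (τ i)))) : ℝ)) *
            (inner ℝ (x (σ (Fin.natAdd k 0))) (y (ρ (Fin.natAdd k 0))) : ℝ)))
        = (k.factorial : ℝ) * ((k.factorial : ℝ) *
            ∑ π : Equiv.Perm (Fin (k + 1)), sgn π * ∏ j, (inner ℝ (x j) (y (π j)) : ℝ)) := by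
      intro σ
      have e1 : ∀ ρ : Equiv.Perm (Fin (k + 1)), sgn σ * sgn ρ *
          (((k.factorial : ℝ) * ∑ τ : Equiv.Perm (Fin k), sgn τ *
              ∏ i, (inner ℝ (x (σ (Fin.castAdd 1 i))) (y (ρ (Fin.castAdd 1 (τ i)))) : ℝ)) *
            (inner ℝ (x (σ (Fin.natAdd k 0))) (y (ρ (Fin.natAdd k 0))) : ℝ))
          = (k.factorial : ℝ) * ∑ τ : Equiv.Perm (Fin k), sgn σ * sgn ρ * sgn τ *
              ((∏ i, (inner ℝ (x (σ (Fin.castAdd 1 i))) (y (ρ (Fin.castAdd 1 (τ i)))) : ℝ)) *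
                (inner ℝ (x (σ (Fin.natAdd k 0))) (y (ρ (Fin.natAdd k 0))) : ℝ)) := by
        intro ρ
        simp only [Finset.mul_sum, Finset.sum_mul]
        exact Finset.sum_congr rfl fun τ _ => by ring
      rw [Finset.sum_congr rfl fun ρ _ => e1 ρ, ← Finset.mul_sum, Finset.sum_comm]
      rw [Finset.sum_congr rfl fun τ _ => inner_eq σ τ, Finset.sum_const,
        Finset.card_univ, Fintype.card_perm, Fintype.card_fin, nsmul_eq_mul]
    rw [Finset.sum_congr rfl fun σ _ => big σ, Finset.sum_const, Finset.card_univ,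
      Fintype.card_perm, Fintype.card_fin, nsmul_eq_mul]
    have hk : ((k.factorial : ℕ) : ℝ) ≠ 0 := Nat.cast_ne_zero.2 (Nat.factorial_ne_zero k)
    simp only [Nat.factorial_one, mul_one, Nat.factorial_succ]
    push_cast
    field_simp
    ring

/-- the core evaluation lemma -/
lemma KN_gpow_eval (k r : ℕ) (x : Fin (k + r) → V)
    (hx : ∀ a a' : Fin (k + r), (inner ℝ (x a) (x a') : ℝ) = if a = a' then 1 else 0)
    (F : DFr V r r)
    (hF : ∀ (u v : Fin r → V) (μ : Equiv.Perm (Fin r)),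
      F u (fun c => v (μ c)) = sgn μ * F u v) :
    KN k r k r (gpow k) F x x
      = ((r.factorial : ℝ))⁻¹ * ∑ σ : Equiv.Perm (Fin (k + r)),
          F (fun c => x (σ (Fin.natAdd k c))) (fun c => x (σ (Fin.natAdd k c))) := by
  have phase2 : ∀ σ : Equiv.Perm (Fin (k + r)),
      (∑ π : Equiv.Perm (Fin (k + r)), sgn π *
        ((∏ i, (inner ℝ (x (σ (Fin.castAdd r i))) (x (π (σ (Fin.castAdd r i)))) : ℝ)) *
          F (fun c => x (σ (Fin.natAdd k c))) (fun c => x (π (σ (Fin.natAdd k c))))))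
      = (r.factorial : ℝ) * F (fun c => x (σ (Fin.natAdd k c)))
          (fun c => x (σ (Fin.natAdd k c))) := by
    intro σ
    set u : Fin r → V := fun c => x (σ (Fin.natAdd k c)) with hu
    have hprod : ∀ π : Equiv.Perm (Fin (k + r)),
        (∏ i, (inner ℝ (x (σ (Fin.castAdd r i))) (x (π (σ (Fin.castAdd r i)))) : ℝ))
        = if (∀ i ∈ Finset.univ, σ (Fin.castAdd r i) = π (σ (Fin.castAdd r i)))
            then 1 else 0 := by
      intro π
      rw [Finset.prod_congr rfl fun i _ => hx _ _, Finset.prod_boole]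
      by_cases h : ∀ i ∈ Finset.univ, σ (Fin.castAdd r i) = π (σ (Fin.castAdd r i))
      · simp only [if_pos h]
      · simp only [if_neg h]
    have step1 : (∑ π : Equiv.Perm (Fin (k + r)), sgn π *
        ((∏ i, (inner ℝ (x (σ (Fin.castAdd r i))) (x (π (σ (Fin.castAdd r i)))) : ℝ)) *
          F u (fun c => x (π (σ (Fin.natAdd k c))))))
        = ∑ π : Equiv.Perm (Fin (k + r)),
            if (∀ i ∈ Finset.univ, σ (Fin.castAdd r i) = π (σ (Fin.castAdd r i)))
            then sgn π * F u (fun c => x (π (σ (Fin.natAdd k c)))) else 0 := by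
      refine Finset.sum_congr rfl fun π _ => ?_
      rw [hprod π]
      by_cases h : (∀ i ∈ Finset.univ, σ (Fin.castAdd r i) = π (σ (Fin.castAdd r i)))
      · rw [if_pos h, if_pos h, one_mul]
      · rw [if_neg h, if_neg h, zero_mul, mul_zero]
    rw [step1, ← Finset.sum_filter]
    have hset : (Finset.univ.filter (fun π : Equiv.Perm (Fin (k + r)) =>
        ∀ i ∈ Finset.univ, σ (Fin.castAdd r i) = π (σ (Fin.castAdd r i))))
        = Finset.image (fun μ : Equiv.Perm (Fin r) => σ * ext2 μ * σ⁻¹) Finset.univ := by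
      ext π
      simp only [Finset.mem_filter, Finset.mem_image, Finset.mem_univ, true_and]
      constructor
      · intro h
        have hν : ∀ i : Fin k, (σ⁻¹ * π * σ) (Fin.castAdd r i) = Fin.castAdd r i := by
          intro i
          simp only [Equiv.Perm.mul_apply]
          rw [← h i (by simp)]; exact Equiv.symm_apply_apply _ _
        obtain ⟨μ, hμ⟩ := exists_ext2 _ hν
        refine ⟨μ, ?_⟩
        rw [← hμ]
        group
      · rintro ⟨μ, rfl⟩ i _
        simp [Equiv.Perm.mul_apply, ext2_castAdd]
    have hJinj : ∀ μ ∈ (Finset.univ : Finset (Equiv.Perm (Fin r))),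
        ∀ μ' ∈ (Finset.univ : Finset (Equiv.Perm (Fin r))),
        σ * ext2 μ * σ⁻¹ = σ * ext2 μ' * σ⁻¹ → μ = μ' := by
      intro μ _ μ' _ h
      have h2 : ext2 (k := k) μ = ext2 μ' := by
        have := congrArg (fun z => σ⁻¹ * z * σ) h
        simpa [mul_assoc] using this
      ext c
      have := congrArg (fun z : Equiv.Perm (Fin (k + r)) => z (Fin.natAdd k c)) h2
      simp only [ext2_natAdd] at this
      have := congrArg Fin.val this
      simp only [Fin.coe_natAdd] at this
      omega
    rw [hset, Finset.sum_image hJinj]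
    have per : ∀ μ : Equiv.Perm (Fin r),
        sgn (σ * ext2 μ * σ⁻¹) *
          F u (fun c => x ((σ * ext2 μ * σ⁻¹ : Equiv.Perm (Fin (k + r))) (σ (Fin.natAdd k c)))) = F u u := by
      intro μ
      have happ : (fun c => x ((σ * ext2 μ * σ⁻¹ : Equiv.Perm (Fin (k + r))) (σ (Fin.natAdd k c))))
          = fun c => u (μ c) := by
        funext c
        simp [Equiv.Perm.mul_apply, ext2_natAdd, hu]
      rw [happ, hF u u μ, sgn_mul, sgn_mul, sgn_inv, sgn_ext2]
      ring_nf
      simp [sgn_sq']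
    rw [Finset.sum_congr rfl fun μ _ => per μ, Finset.sum_const, Finset.card_univ,
      Fintype.card_perm, Fintype.card_fin, nsmul_eq_mul]
  have inner_eq : ∀ (σ : Equiv.Perm (Fin (k + r))) (τ : Equiv.Perm (Fin k)),
      (∑ ρ : Equiv.Perm (Fin (k + r)), sgn σ * sgn ρ * sgn τ *
        ((∏ i, (inner ℝ (x (σ (Fin.castAdd r i))) (x (ρ (Fin.castAdd r (τ i)))) : ℝ)) *
          F (fun c => x (σ (Fin.natAdd k c))) (fun c => x (ρ (Fin.natAdd k c)))))
      = (r.factorial : ℝ) * F (fun c => x (σ (Fin.natAdd k c)))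
          (fun c => x (σ (Fin.natAdd k c))) := by
    intro σ τ
    rw [← phase2 σ]
    rw [← Equiv.sum_comp (Equiv.mulRight (σ * (ext1 (r := r) τ)⁻¹))
      (fun ρ => sgn σ * sgn ρ * sgn τ *
        ((∏ i, (inner ℝ (x (σ (Fin.castAdd r i))) (x (ρ (Fin.castAdd r (τ i)))) : ℝ)) *
          F (fun c => x (σ (Fin.natAdd k c))) (fun c => x (ρ (Fin.natAdd k c)))))]
    refine Finset.sum_congr rfl fun π _ => ?_
    simp only [Equiv.coe_mulRight, Equiv.Perm.mul_apply, ext1_inv_castAdd,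
      ext1_inv_natAdd, sgn_mul, sgn_inv, sgn_ext1]
    ring_nf
    simp [sgn_sq']
  simp only [KN, gpow_eq, sgn_def]
  have big : ∀ σ : Equiv.Perm (Fin (k + r)),
      (∑ ρ : Equiv.Perm (Fin (k + r)), sgn σ * sgn ρ *
        (((k.factorial : ℝ) * ∑ τ : Equiv.Perm (Fin k), sgn τ *
            ∏ i, (inner ℝ (x (σ (Fin.castAdd r i))) (x (ρ (Fin.castAdd r (τ i)))) : ℝ)) *
          F (fun c => x (σ (Fin.natAdd k c))) (fun c => x (ρ (Fin.natAdd k c)))))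
      = ((k.factorial : ℝ) * (k.factorial : ℝ) * (r.factorial : ℝ)) *
          F (fun c => x (σ (Fin.natAdd k c))) (fun c => x (σ (Fin.natAdd k c))) := by
    intro σ
    have e1 : ∀ ρ : Equiv.Perm (Fin (k + r)), sgn σ * sgn ρ *
        (((k.factorial : ℝ) * ∑ τ : Equiv.Perm (Fin k), sgn τ *
            ∏ i, (inner ℝ (x (σ (Fin.castAdd r i))) (x (ρ (Fin.castAdd r (τ i)))) : ℝ)) *
          F (fun c => x (σ (Fin.natAdd k c))) (fun c => x (ρ (Fin.natAdd k c))))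
        = (k.factorial : ℝ) * ∑ τ : Equiv.Perm (Fin k), sgn σ * sgn ρ * sgn τ *
            ((∏ i, (inner ℝ (x (σ (Fin.castAdd r i))) (x (ρ (Fin.castAdd r (τ i)))) : ℝ)) *
              F (fun c => x (σ (Fin.natAdd k c))) (fun c => x (ρ (Fin.natAdd k c)))) := by
      intro ρ
      simp only [Finset.mul_sum, Finset.sum_mul]
      exact Finset.sum_congr rfl fun τ _ => by ring
    rw [Finset.sum_congr rfl fun ρ _ => e1 ρ, ← Finset.mul_sum, Finset.sum_comm]
    rw [Finset.sum_congr rfl fun τ _ => inner_eq σ τ, Finset.sum_const,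
      Finset.card_univ, Fintype.card_perm, Fintype.card_fin, nsmul_eq_mul]
    ring
  rw [Finset.sum_congr rfl fun σ _ => big σ, ← Finset.mul_sum]
  have hk : ((k.factorial : ℕ) : ℝ) ≠ 0 := Nat.cast_ne_zero.2 (Nat.factorial_ne_zero k)
  have hr : ((r.factorial : ℕ) : ℝ) ≠ 0 := Nat.cast_ne_zero.2 (Nat.factorial_ne_zero r)
  push_cast
  field_simp

/-- counting: sum over permutations of a function of one value -/
lemma sum_perm_one {p : ℕ} (t : Fin (p + 1)) (h : Fin (p + 1) → ℝ) :
    ∑ σ : Equiv.Perm (Fin (p + 1)), h (σ t) = (p.factorial : ℝ) * ∑ m, h m := by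
  have h1 : ∑ σ : Equiv.Perm (Fin (p + 1)), h (σ t)
      = ∑ σ : Equiv.Perm (Fin (p + 1)), h (σ 0) := by
    rw [← Equiv.sum_comp (Equiv.mulRight (Equiv.swap 0 t)) (fun σ => h (σ 0))]
    refine Finset.sum_congr rfl fun σ _ => ?_
    simp [Equiv.Perm.mul_apply]
  rw [h1, ← Equiv.sum_comp (Equiv.Perm.decomposeFin.symm) (fun σ => h (σ 0))]
  rw [Fintype.sum_prod_type]
  simp [Equiv.Perm.decomposeFin_symm_apply_zero, Finset.sum_const, Fintype.card_perm]
  rw [Finset.mul_sum]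

/-- counting: sum over permutations of a function of two values -/
lemma sum_perm_two {p : ℕ} (t0 t1 : Fin (p + 2)) (ht : t0 ≠ t1)
    (H : Fin (p + 2) → Fin (p + 2) → ℝ) :
    ∑ σ : Equiv.Perm (Fin (p + 2)), H (σ t0) (σ t1)
      = (p.factorial : ℝ) * ∑ a, ∑ b, if a ≠ b then H a b else 0 := by
  have hA : ∑ σ : Equiv.Perm (Fin (p + 2)), H (σ t0) (σ t1)
      = ∑ σ : Equiv.Perm (Fin (p + 2)), H (σ 0) (σ (Equiv.swap 0 t0 t1)) := by
    have hc := Equiv.sum_comp (Equiv.mulRight (Equiv.swap 0 t0))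
      (fun σ : Equiv.Perm (Fin (p + 2)) => H (σ 0) (σ (Equiv.swap 0 t0 t1)))
    rw [← hc]
    refine Finset.sum_congr rfl fun σ _ => ?_
    simp only [Equiv.coe_mulRight, Equiv.Perm.mul_apply, Equiv.swap_apply_left,
      Equiv.swap_apply_self]
  set t1' : Fin (p + 2) := Equiv.swap 0 t0 t1 with ht1def
  have ht1' : t1' ≠ 0 := by
    intro h
    apply ht
    have : Equiv.swap 0 t0 t1 = Equiv.swap 0 t0 t0 := by
      rw [Equiv.swap_apply_right, ← ht1def, h]
    exact ((Equiv.swap 0 t0).injective this).symm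
  obtain ⟨i0, hi0⟩ := Fin.eq_succ_of_ne_zero ht1'
  have hB : ∑ σ : Equiv.Perm (Fin (p + 2)), H (σ 0) (σ t1')
      = ∑ m : Fin (p + 2), ∑ τ : Equiv.Perm (Fin (p + 1)),
          H m (Equiv.swap 0 m ((τ i0).succ)) := by
    have hc := Equiv.sum_comp (Equiv.Perm.decomposeFin.symm)
      (fun σ : Equiv.Perm (Fin (p + 2)) => H (σ 0) (σ t1'))
    rw [← hc, Fintype.sum_prod_type]
    refine Finset.sum_congr rfl fun m _ => Finset.sum_congr rfl fun τ _ => ?_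
    rw [hi0]
    simp only [Equiv.Perm.decomposeFin_symm_apply_zero,
      Equiv.Perm.decomposeFin_symm_apply_succ]
  have hD : ∀ m : Fin (p + 2), ∑ τ : Equiv.Perm (Fin (p + 1)),
      H m (Equiv.swap 0 m ((τ i0).succ))
      = (p.factorial : ℝ) * ∑ c : Fin (p + 1), H m (Equiv.swap 0 m c.succ) :=
    fun m => sum_perm_one i0 (fun c => H m (Equiv.swap 0 m c.succ))
  have hE : ∀ m : Fin (p + 2), ∑ c : Fin (p + 1), H m (Equiv.swap 0 m c.succ)
      = ∑ b : Fin (p + 2), if m ≠ b then H m b else 0 := by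
    intro m
    rw [← Finset.sum_filter]
    have hpred : ∀ b ∈ Finset.univ.filter (fun b : Fin (p + 2) => m ≠ b),
        Equiv.swap 0 m b ≠ 0 := by
      intro b hb h
      have h2 := congrArg (Equiv.swap 0 m) h
      rw [Equiv.swap_apply_self, Equiv.swap_apply_left] at h2
      simp only [Finset.mem_filter, Finset.mem_univ, true_and] at hb
      exact hb h2.symm
    refine (Finset.sum_bij'
      (s := (Finset.univ : Finset (Fin (p + 1))))
      (t := Finset.univ.filter (fun b : Fin (p + 2) => m ≠ b))
      (f := fun c => H m (Equiv.swap 0 m c.succ))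
      (g := fun b => H m b)
      (fun c _ => Equiv.swap 0 m c.succ)
      (fun b hb => (Equiv.swap 0 m b).pred (hpred b hb))
      ?_ ?_ ?_ ?_ ?_)
    case refine_1 =>
      intro c _
      simp only [Finset.mem_filter, Finset.mem_univ, true_and]
      intro h
      have h2 := congrArg (Equiv.swap 0 m) h
      rw [Equiv.swap_apply_self, Equiv.swap_apply_right] at h2
      exact (Fin.succ_ne_zero c) h2.symm
    case refine_2 =>
      intro b _; exact Finset.mem_univ _
    case refine_3 =>
      intro c _
      simp [Equiv.swap_apply_self, Fin.pred_succ]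
    case refine_4 =>
      intro b _
      simp [Fin.succ_pred, Equiv.swap_apply_self]
    case refine_5 =>
      intro c _
      rfl
  rw [hA, hB, Finset.sum_congr rfl fun m _ => hD m, ← Finset.mul_sum]
  rw [Finset.sum_congr rfl fun m _ => hE m]

set_option linter.unusedSectionVars false

lemma cons_eq_matrix (u v : V) : (Fin.cons u (fun _ : Fin 1 => v) : Fin 2 → V) = ![u, v] := by
  funext c; fin_cases c <;> rfl

lemma W_diag (ω : DF V 2 2) (u : V) (y : Fin 2 → V) : rawDF ω ![u, u] y = 0 := by
  have h : ω ![u, u] = 0 :=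
    AlternatingMap.map_eq_zero_of_eq ω ![u, u] (i := 0) (j := 1) rfl (by decide)
  show ω ![u, u] y = 0
  rw [h]; rfl

lemma W_swap (ω : DF V 2 2) (u v : V) :
    rawDF ω ![v, u] ![v, u] = rawDF ω ![u, v] ![u, v] := by
  have hsf : (![u, v] ∘ (Equiv.swap (0 : Fin 2) 1)) = ![v, u] := by
    funext c; fin_cases c <;> simp [Equiv.swap_apply_left, Equiv.swap_apply_right]
  have h01 : (0 : Fin 2) ≠ 1 := by decide
  have h1 : ω (![u, v] ∘ (Equiv.swap (0 : Fin 2) 1)) = - ω ![u, v] :=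
    AlternatingMap.map_swap ω ![u, v] h01
  show ω ![v, u] ![v, u] = ω ![u, v] ![u, v]
  rw [← hsf, h1]
  rw [AlternatingMap.neg_apply]
  rw [AlternatingMap.map_swap (ω ![u, v]) ![u, v] h01]
  ring

set_option linter.unusedSectionVars false

lemma sum_castLE {q : ℕ} (hpn : q + 2 ≤ n) (g : Fin n → ℝ) :
    ∑ m : Fin (q + 2), g (Fin.castLE hpn m)
      = ∑ i : Fin n, if (i : ℕ) < q + 2 then g i else 0 := by
  rw [← Finset.sum_filter]
  refine Finset.sum_bij' (fun m _ => Fin.castLE hpn m)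
    (fun i hi => ⟨(i : ℕ), by simpa using (Finset.mem_filter.1 hi).2⟩) ?_ ?_ ?_ ?_ ?_
  · intro m _
    simp only [Finset.mem_filter, Finset.mem_univ, true_and]
    exact m.isLt
  · intro i _; exact Finset.mem_univ _
  · intro m _; apply Fin.ext; rfl
  · intro i _; apply Fin.ext; rfl
  · intro m _; rfl

lemma ite_sum_push {c : Prop} [Decidable c] (f : Fin n → ℝ) :
    (if c then (∑ j, f j) else 0) = ∑ j, if c then f j else 0 := by
  by_cases h : c <;> simp [h]

variable (V)

/-- `Σ_{i=1}^p Σ_{j=p+1}^n ω(e_i∧e_j, e_i∧e_j)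
= (g^{p−1}·(cω)/(p−1)! − 2 g^{p−2}·ω/(p−2)!)(e₁∧…∧e_p, e₁∧…∧e_p)`. -/
theorem sectional_eq_product (n : ℕ) (b : OrthonormalBasis (Fin n) ℝ V)
    (ω : DF V 2 2) (hsym : Symm 2 (rawDF ω))
    (p : ℕ) (hp2 : 2 ≤ p) (hpn : p ≤ n) :
    (∑ i : Fin n, ∑ j : Fin n,
        if (i : ℕ) < p ∧ p ≤ (j : ℕ) then rawDF ω ![b i, b j] ![b i, b j] else 0) =
      ((((p - 1).factorial : ℝ))⁻¹ •
          castDF (show (p - 1) + 1 = p by omega) (show (p - 1) + 1 = p by omega)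
            (KN (p - 1) 1 (p - 1) 1 (gpow (p - 1)) (contr b 1 1 (rawDF ω)))
        - (2 : ℝ) • (((p - 2).factorial : ℝ))⁻¹ •
          castDF (show (p - 2) + 2 = p by omega) (show (p - 2) + 2 = p by omega)
            (KN (p - 2) 2 (p - 2) 2 (gpow (p - 2)) (rawDF ω)))
        (fun a => b (Fin.castLE hpn a)) (fun a => b (Fin.castLE hpn a)) := by
  obtain ⟨q, rfl⟩ : ∃ q, p = q + 2 := ⟨p - 2, by omega⟩
  simp only [Pi.sub_apply, Pi.smul_apply, smul_eq_mul, castDF,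
    show q + 2 - 1 = q + 1 from rfl, show q + 2 - 2 = q from rfl]
  set x : Fin (q + 2) → V := fun a => b (Fin.castLE hpn a) with hxdef
  have hb : ∀ i j : Fin n, (inner ℝ (b i) (b j) : ℝ) = if i = j then 1 else 0 :=
    orthonormal_iff_ite.mp b.orthonormal
  have hx : ∀ a a' : Fin (q + 2), (inner ℝ (x a) (x a') : ℝ) = if a = a' then 1 else 0 := by
    intro a a'
    rw [hxdef]
    simp only []
    rw [hb]
    by_cases h : a = a'
    · rw [if_pos h, if_pos (by rw [h])]
    · rw [if_neg h, if_neg (fun hc => h (Fin.castLE_injective hpn hc))]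
  have h1 : (q + 1) + 1 = q + 2 := rfl
  set x1 : Fin ((q + 1) + 1) → V := fun i => x (Fin.cast h1 i) with hx1def
  have hx1 : ∀ a a' : Fin ((q + 1) + 1), (inner ℝ (x1 a) (x1 a') : ℝ)
      = if a = a' then 1 else 0 := by
    intro a a'
    rw [hx1def]
    simp only []
    rw [hx]
    by_cases h : a = a'
    · rw [if_pos h, if_pos (by rw [h])]
    · rw [if_neg h, if_neg (fun hc => h (by
        apply Fin.ext
        exact congrArg Fin.val hc))]
  set Fc : DFr V 1 1 := contr b 1 1 (rawDF ω) with hFcdef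
  have hF1 : ∀ (u v : Fin 1 → V) (μ : Equiv.Perm (Fin 1)),
      Fc u (fun c => v (μ c)) = sgn μ * Fc u v := by
    intro u v μ
    have hμ : μ = 1 := by
      apply Equiv.ext
      intro c
      exact Subsingleton.elim _ _
    subst hμ
    simp [sgn]
  have hF2 : ∀ (u v : Fin 2 → V) (μ : Equiv.Perm (Fin 2)),
      rawDF ω u (fun c => v (μ c)) = sgn μ * rawDF ω u v := by
    intro u v μ
    have h := AlternatingMap.map_perm (ω u) v μ
    simp [rawDF, sgn, Function.comp, Units.smul_def, zsmul_eq_mul] at h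
    exact h
  have T1 := KN_gpow_eval (q + 1) 1 x1 hx1 Fc hF1
  have T2 := KN_gpow_eval q 2 x hx (rawDF ω) hF2
  have hone : ∀ σ : Equiv.Perm (Fin ((q + 1) + 1)),
      Fc (fun c => x1 (σ (Fin.natAdd (q + 1) c))) (fun c => x1 (σ (Fin.natAdd (q + 1) c)))
      = Fc (fun _ => x1 (σ (Fin.natAdd (q + 1) 0))) (fun _ => x1 (σ (Fin.natAdd (q + 1) 0))) := by
    intro σ
    have hc : (fun c : Fin 1 => x1 (σ (Fin.natAdd (q + 1) c)))
        = fun _ : Fin 1 => x1 (σ (Fin.natAdd (q + 1) 0)) :=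
      funext fun c => by rw [Subsingleton.elim c (0 : Fin 1)]
    rw [hc]
  have hsum1 : ∑ m : Fin ((q + 1) + 1), Fc (fun _ => x1 m) (fun _ => x1 m)
      = ∑ m : Fin (q + 2), Fc (fun _ => x m) (fun _ => x m) :=
    Fintype.sum_equiv (finCongr h1) _ _ (fun m => rfl)
  have E1 : ((q + 1).factorial : ℝ)⁻¹ * KN (q + 1) 1 (q + 1) 1 (gpow (q + 1)) Fc x1 x1
      = ∑ m : Fin (q + 2), Fc (fun _ => x m) (fun _ => x m) := by
    rw [T1, Finset.sum_congr rfl fun σ _ => hone σ,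
      sum_perm_one (Fin.natAdd (q + 1) 0) (fun m => Fc (fun _ => x1 m) (fun _ => x1 m)),
      hsum1]
    have hfac : (((q + 1).factorial : ℕ) : ℝ) ≠ 0 := Nat.cast_ne_zero.2 (Nat.factorial_ne_zero _)
    rw [show ((Nat.factorial 1 : ℕ) : ℝ) = 1 by norm_num]
    field_simp
  have htwo : ∀ σ : Equiv.Perm (Fin (q + 2)),
      rawDF ω (fun c => x (σ (Fin.natAdd q c))) (fun c => x (σ (Fin.natAdd q c)))
      = rawDF ω ![x (σ (Fin.natAdd q 0)), x (σ (Fin.natAdd q 1))]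
          ![x (σ (Fin.natAdd q 0)), x (σ (Fin.natAdd q 1))] := by
    intro σ
    have hc : (fun c : Fin 2 => x (σ (Fin.natAdd q c)))
        = ![x (σ (Fin.natAdd q 0)), x (σ (Fin.natAdd q 1))] := by
      funext c; fin_cases c <;> rfl
    rw [hc]
  have ht01 : (Fin.natAdd q (0 : Fin 2)) ≠ Fin.natAdd q 1 := by
    intro h
    have := congrArg Fin.val h
    simp [Fin.coe_natAdd] at this
  have E2 : 2 * ((q.factorial : ℝ)⁻¹ * KN q 2 q 2 (gpow q) (rawDF ω) x x)
      = ∑ a : Fin (q + 2), ∑ b' : Fin (q + 2),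
          if a ≠ b' then rawDF ω ![x a, x b'] ![x a, x b'] else 0 := by
    rw [T2, Finset.sum_congr rfl fun σ _ => htwo σ,
      sum_perm_two (Fin.natAdd q 0) (Fin.natAdd q 1) ht01
        (fun a a' => rawDF ω ![x a, x a'] ![x a, x a'])]
    have hfq : ((q.factorial : ℕ) : ℝ) ≠ 0 := Nat.cast_ne_zero.2 (Nat.factorial_ne_zero _)
    rw [show ((Nat.factorial 2 : ℕ) : ℝ) = 2 by norm_num]
    field_simp
  have main : (∑ i : Fin n, ∑ j : Fin n,
        if (i : ℕ) < q + 2 ∧ q + 2 ≤ (j : ℕ) then rawDF ω ![b i, b j] ![b i, b j] else 0)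
      = (∑ m : Fin (q + 2), Fc (fun _ => x m) (fun _ => x m))
        - ∑ a : Fin (q + 2), ∑ b' : Fin (q + 2),
            if a ≠ b' then rawDF ω ![x a, x b'] ![x a, x b'] else 0 := by
    have hFc1 : ∀ m : Fin (q + 2), Fc (fun _ => x m) (fun _ => x m)
        = ∑ j : Fin n, rawDF ω ![b j, x m] ![b j, x m] := by
      intro m
      rw [hFcdef]
      show (∑ j : Fin n, rawDF ω (Fin.cons (b j) (fun _ => x m)) (Fin.cons (b j) (fun _ => x m))) = _
      exact Finset.sum_congr rfl fun j _ => by rw [cons_eq_matrix]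
    have c1 : (∑ m : Fin (q + 2), Fc (fun _ => x m) (fun _ => x m))
        = ∑ i : Fin n, if (i : ℕ) < q + 2
            then (∑ j : Fin n, rawDF ω ![b j, b i] ![b j, b i]) else 0 := by
      rw [Finset.sum_congr rfl fun m _ => hFc1 m]
      exact sum_castLE hpn (fun i => ∑ j : Fin n, rawDF ω ![b j, b i] ![b j, b i])
    have c2 : (∑ a : Fin (q + 2), ∑ b' : Fin (q + 2),
          if a ≠ b' then rawDF ω ![x a, x b'] ![x a, x b'] else 0)
        = ∑ i : Fin n, if (i : ℕ) < q + 2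
            then (∑ j : Fin n, if (j : ℕ) < q + 2
              then (if i ≠ j then rawDF ω ![b i, b j] ![b i, b j] else 0) else 0) else 0 := by
      have inner2 : ∀ a : Fin (q + 2), (∑ b' : Fin (q + 2),
          if a ≠ b' then rawDF ω ![x a, x b'] ![x a, x b'] else 0)
          = ∑ j : Fin n, if (j : ℕ) < q + 2
              then (if Fin.castLE hpn a ≠ j
                then rawDF ω ![x a, b j] ![x a, b j] else 0) else 0 := by
        intro a
        have step : ∀ b' : Fin (q + 2), (if a ≠ b' then rawDF ω ![x a, x b'] ![x a, x b'] else 0)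
            = (fun j => if Fin.castLE hpn a ≠ j
                then rawDF ω ![x a, b j] ![x a, b j] else 0) (Fin.castLE hpn b') := by
          intro b'
          simp only []
          have hiff : (a ≠ b') ↔ (Fin.castLE hpn a ≠ Fin.castLE hpn b') := by
            constructor
            · intro h hc; exact h (Fin.castLE_injective hpn hc)
            · intro h hc; exact h (by rw [hc])
          rw [if_congr hiff rfl rfl]
        rw [Finset.sum_congr rfl fun b' _ => step b']
        exact sum_castLE hpn
          (fun j => if Fin.castLE hpn a ≠ j then rawDF ω ![x a, b j] ![x a, b j] else 0)
      rw [Finset.sum_congr rfl fun a _ => inner2 a]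
      have step2 : ∀ a : Fin (q + 2), (∑ j : Fin n, if (j : ℕ) < q + 2
            then (if Fin.castLE hpn a ≠ j then rawDF ω ![x a, b j] ![x a, b j] else 0) else 0)
          = (fun i => ∑ j : Fin n, if (j : ℕ) < q + 2
              then (if i ≠ j then rawDF ω ![b i, b j] ![b i, b j] else 0) else 0)
            (Fin.castLE hpn a) := by
        intro a
        rfl
      rw [Finset.sum_congr rfl fun a _ => step2 a]
      exact sum_castLE hpn (fun i => ∑ j : Fin n, if (j : ℕ) < q + 2
        then (if i ≠ j then rawDF ω ![b i, b j] ![b i, b j] else 0) else 0)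
    rw [c1, c2]
    have pushed1 : (∑ i : Fin n, if (i : ℕ) < q + 2
          then (∑ j : Fin n, rawDF ω ![b j, b i] ![b j, b i]) else 0)
        = ∑ i : Fin n, ∑ j : Fin n,
            if (i : ℕ) < q + 2 then rawDF ω ![b j, b i] ![b j, b i] else 0 :=
      Finset.sum_congr rfl fun i _ => ite_sum_push _
    have pushed2 : (∑ i : Fin n, if (i : ℕ) < q + 2
          then (∑ j : Fin n, if (j : ℕ) < q + 2
            then (if i ≠ j then rawDF ω ![b i, b j] ![b i, b j] else 0) else 0) else 0)
        = ∑ i : Fin n, ∑ j : Fin n, if (i : ℕ) < q + 2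
            then (if (j : ℕ) < q + 2
              then (if i ≠ j then rawDF ω ![b i, b j] ![b i, b j] else 0) else 0) else 0 :=
      Finset.sum_congr rfl fun i _ => ite_sum_push _
    rw [pushed1, pushed2, ← Finset.sum_sub_distrib]
    refine Finset.sum_congr rfl fun i _ => ?_
    rw [← Finset.sum_sub_distrib]
    refine Finset.sum_congr rfl fun j _ => ?_
    by_cases hi : (i : ℕ) < q + 2
    · by_cases hj : (j : ℕ) < q + 2
      · have hnj : ¬ (q + 2 ≤ (j : ℕ)) := by omega
        rw [if_neg (by tauto), if_pos hi, if_pos hi, if_pos hj]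
        by_cases hij : i = j
        · rw [if_neg (by tauto)]
          subst hij
          rw [W_diag]
          ring
        · rw [if_pos hij, W_swap]
          ring
      · have hj2 : q + 2 ≤ (j : ℕ) := by omega
        rw [if_pos ⟨hi, hj2⟩, if_pos hi, if_pos hi, if_neg hj, W_swap]
        ring
    · rw [if_neg (by tauto), if_neg hi, if_neg hi]
      ring
  show (∑ i : Fin n, ∑ j : Fin n,
        if (i : ℕ) < q + 2 ∧ q + 2 ≤ (j : ℕ) then rawDF ω ![b i, b j] ![b i, b j] else 0)
      = ((q + 1).factorial : ℝ)⁻¹ * KN (q + 1) 1 (q + 1) 1 (gpow (q + 1)) Fc x1 x1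
        - 2 * ((q.factorial : ℝ)⁻¹ * KN q 2 q 2 (gpow q) (rawDF ω) x x)
  rw [E1, E2]
  exact main


end Weitzenbock
end

section
/- Let ω be a symmetric (r,r)-double form on V, let p ≥ 0 with p + r ≤ n, and let e₁,…,e_{p+r} be orthonormal vectors in V. Then (g^p·ω)(e₁∧…∧e_{p+r}, e₁∧…∧e_{p+r}) = p! Σ_{1≤i₁<i₂<…<i_r≤p+r} ω(e_{i₁}∧…∧e_{i_r}, e_{i₁}∧…∧e_{i_r}), where g^p·ω is the Kulkarni–Nomizu product. -/
open scoped BigOperators RealInnerProductSpace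

namespace Weitzenbock

variable (V : Type) [NormedAddCommGroup V] [InnerProductSpace ℝ V]

variable {V}

variable {n : ℕ}

/-- real sign squared is 1 -/
lemma sgn_mul_self {α : Type*} [DecidableEq α] [Fintype α] (σ : Equiv.Perm α) :
    ((Equiv.Perm.sign σ : ℤ) : ℝ) * ((Equiv.Perm.sign σ : ℤ) : ℝ) = 1 := by
  rcases Int.units_eq_one_or (Equiv.Perm.sign σ) with h | h <;> rw [h] <;> norm_num

lemma detR {k : ℕ} (M : Matrix (Fin k) (Fin k) ℝ) :
    M.det = ∑ σ : Equiv.Perm (Fin k), ((Equiv.Perm.sign σ : ℤ) : ℝ) * ∏ i, M (σ i) i := by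
  rw [Matrix.det_apply]
  refine Finset.sum_congr rfl fun σ _ => ?_
  rw [Units.smul_def, zsmul_eq_mul]

lemma detC {k : ℕ} (M : Matrix (Fin k) (Fin k) ℝ) :
    M.det = ∑ σ : Equiv.Perm (Fin k), ((Equiv.Perm.sign σ : ℤ) : ℝ) * ∏ i, M i (σ i) := by
  rw [← Matrix.det_transpose, detR]
  rfl

/-- Block permutation -/
def blockPerm (p r : ℕ) (a : Equiv.Perm (Fin p)) (b : Equiv.Perm (Fin r)) :
    Equiv.Perm (Fin (p + r)) :=
  finSumFinEquiv.permCongr (a.sumCongr b)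

lemma blockPerm_castAdd (p r : ℕ) (a : Equiv.Perm (Fin p)) (b : Equiv.Perm (Fin r)) (i : Fin p) :
    blockPerm p r a b (Fin.castAdd r i) = Fin.castAdd r (a i) := by
  simp [blockPerm, ← finSumFinEquiv_apply_left, Equiv.permCongr_apply]

lemma blockPerm_natAdd (p r : ℕ) (a : Equiv.Perm (Fin p)) (b : Equiv.Perm (Fin r)) (j : Fin r) :
    blockPerm p r a b (Fin.natAdd p j) = Fin.natAdd p (b j) := by
  simp [blockPerm, ← finSumFinEquiv_apply_right, Equiv.permCongr_apply]

lemma sign_blockPerm (p r : ℕ) (a : Equiv.Perm (Fin p)) (b : Equiv.Perm (Fin r)) :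
    Equiv.Perm.sign (blockPerm p r a b) = Equiv.Perm.sign a * Equiv.Perm.sign b := by
  rw [blockPerm, Equiv.Perm.sign_permCongr, Equiv.Perm.sign_sumCongr]

lemma castAdd_inj {p r : ℕ} {i j : Fin p} (h : Fin.castAdd r i = Fin.castAdd r j) : i = j := by
  apply Fin.ext; have := congrArg Fin.val h; simpa using this

lemma natAdd_inj {p r : ℕ} {i j : Fin r} (h : Fin.natAdd p i = Fin.natAdd p j) : i = j := by
  apply Fin.ext; have := congrArg Fin.val h; simpa using this

lemma blockPerm_injective (p r : ℕ) :
    Function.Injective (fun ab : Equiv.Perm (Fin p) × Equiv.Perm (Fin r) =>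
      blockPerm p r ab.1 ab.2) := by
  rintro ⟨a, b⟩ ⟨a', b'⟩ h
  simp only [Prod.mk.injEq]
  constructor
  · ext i
    have := congrArg (fun σ : Equiv.Perm (Fin (p+r)) => σ (Fin.castAdd r i)) h
    simp only [blockPerm_castAdd] at this
    exact congrArg Fin.val (castAdd_inj this)
  · ext j
    have := congrArg (fun σ : Equiv.Perm (Fin (p+r)) => σ (Fin.natAdd p j)) h
    simp only [blockPerm_natAdd] at this
    exact congrArg Fin.val (natAdd_inj this)

lemma exists_blockPerm_of_mapsTo_castAdd {p r : ℕ} (μ : Equiv.Perm (Fin (p + r)))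
    (h : ∀ i : Fin p, ∃ i', μ (Fin.castAdd r i) = Fin.castAdd r i') :
    ∃ ab : Equiv.Perm (Fin p) × Equiv.Perm (Fin r), μ = blockPerm p r ab.1 ab.2 := by
  set ν : Equiv.Perm (Fin p ⊕ Fin r) := (Equiv.permCongr finSumFinEquiv).symm μ with hν
  have hmaps : Set.MapsTo ν (Set.range Sum.inl) (Set.range Sum.inl) := by
    rintro _ ⟨i, rfl⟩
    obtain ⟨i', hi'⟩ := h i
    refine ⟨i', ?_⟩
    simp only [hν, Equiv.permCongr_symm, Equiv.permCongr_apply, Equiv.symm_symm,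
      finSumFinEquiv_apply_left, hi']
    simp [← finSumFinEquiv_apply_left]
  obtain ⟨⟨a, b⟩, hab⟩ := Equiv.Perm.mem_sumCongrHom_range_of_perm_mapsTo_inl hmaps
  refine ⟨(a, b), ?_⟩
  have : finSumFinEquiv.permCongr ν = μ := Equiv.apply_symm_apply _ μ
  rw [← this, ← hab]
  rfl

lemma exists_blockPerm_of_mapsTo_natAdd {p r : ℕ} (μ : Equiv.Perm (Fin (p + r)))
    (h : ∀ j : Fin r, ∃ j', μ (Fin.natAdd p j) = Fin.natAdd p j') :
    ∃ ab : Equiv.Perm (Fin p) × Equiv.Perm (Fin r), μ = blockPerm p r ab.1 ab.2 := by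
  set ν : Equiv.Perm (Fin p ⊕ Fin r) := (Equiv.permCongr finSumFinEquiv).symm μ with hν
  have hmaps : Set.MapsTo ν (Set.range Sum.inr) (Set.range Sum.inr) := by
    rintro _ ⟨j, rfl⟩
    obtain ⟨j', hj'⟩ := h j
    refine ⟨j', ?_⟩
    simp only [hν, Equiv.permCongr_symm, Equiv.permCongr_apply, Equiv.symm_symm,
      finSumFinEquiv_apply_right, hj']
    simp [← finSumFinEquiv_apply_right]
  have hmaps' := (Equiv.Perm.perm_mapsTo_inl_iff_mapsTo_inr ν).mpr hmaps
  obtain ⟨⟨a, b⟩, hab⟩ := Equiv.Perm.mem_sumCongrHom_range_of_perm_mapsTo_inl hmaps'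
  refine ⟨(a, b), ?_⟩
  have : finSumFinEquiv.permCongr ν = μ := Equiv.apply_symm_apply _ μ
  rw [← this, ← hab]
  rfl

/-- determinant of the `castAdd`-block indicator matrix of a block permutation -/
lemma det_indicator_blockPerm (p r : ℕ) (a : Equiv.Perm (Fin p)) (b : Equiv.Perm (Fin r)) :
    (Matrix.of fun i j : Fin p =>
        if Fin.castAdd r i = blockPerm p r a b (Fin.castAdd r j) then (1 : ℝ) else 0).det
      = ((Equiv.Perm.sign a : ℤ) : ℝ) := by
  have hM : (Matrix.of fun i j : Fin p =>
      if Fin.castAdd r i = blockPerm p r a b (Fin.castAdd r j) then (1 : ℝ) else 0)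
      = Equiv.Perm.permMatrix ℝ a⁻¹ := by
    ext i j
    simp only [Matrix.of_apply, blockPerm_castAdd, Equiv.Perm.permMatrix,
      PEquiv.toMatrix_apply, Equiv.toPEquiv_apply, Option.mem_def, Option.some.injEq]
    refine if_congr ?_ rfl rfl
    constructor
    · intro h; rw [Equiv.Perm.inv_eq_iff_eq]; exact castAdd_inj h
    · intro h; rw [Equiv.Perm.inv_eq_iff_eq] at h; rw [← h]
  rw [hM, Matrix.det_permutation]
  norm_num


lemma sum_perm_det_mul (p : ℕ) (A : Matrix (Fin (p + 1)) (Fin (p + 1)) ℝ) :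
    ∑ ρ : Equiv.Perm (Fin (p + 1)), ((Equiv.Perm.sign ρ : ℤ) : ℝ) *
      ((Matrix.of fun i j : Fin p => A (Fin.castAdd 1 i) (ρ (Fin.castAdd 1 j))).det *
        A (Fin.natAdd p 0) (ρ (Fin.natAdd p 0))) = (p.factorial : ℝ) * A.det := by
  have step1 : ∑ ρ : Equiv.Perm (Fin (p + 1)), ((Equiv.Perm.sign ρ : ℤ) : ℝ) *
      ((Matrix.of fun i j : Fin p => A (Fin.castAdd 1 i) (ρ (Fin.castAdd 1 j))).det *
        A (Fin.natAdd p 0) (ρ (Fin.natAdd p 0)))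
      = ∑ ρ : Equiv.Perm (Fin (p + 1)), ∑ τ : Equiv.Perm (Fin p),
        ((Equiv.Perm.sign ρ : ℤ) : ℝ) * ((Equiv.Perm.sign τ : ℤ) : ℝ) *
          ((∏ i : Fin p, A (Fin.castAdd 1 (τ i)) (ρ (Fin.castAdd 1 i))) *
            A (Fin.natAdd p 0) (ρ (Fin.natAdd p 0))) := by
    refine Finset.sum_congr rfl fun ρ _ => ?_
    rw [detR, Finset.sum_mul, Finset.mul_sum]
    refine Finset.sum_congr rfl fun τ _ => ?_
    simp only [Matrix.of_apply]
    ring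
  rw [step1, Finset.sum_comm]
  have step2 : ∀ (τ : Equiv.Perm (Fin p)) (ρ : Equiv.Perm (Fin (p + 1))),
      (∏ i : Fin p, A (Fin.castAdd 1 (τ i)) (ρ (Fin.castAdd 1 i))) *
        A (Fin.natAdd p 0) (ρ (Fin.natAdd p 0))
      = ∏ i : Fin (p + 1), A (blockPerm p 1 τ 1 i) (ρ i) := by
    intro τ ρ
    rw [Fin.prod_univ_castSucc]
    congr 1
    · refine Finset.prod_congr rfl fun i _ => ?_
      congr 1
      exact (blockPerm_castAdd p 1 τ 1 i).symm
    · congr 1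
      exact (blockPerm_natAdd p 1 τ 1 0).symm
  have step3 : ∀ τ : Equiv.Perm (Fin p),
      ∑ ρ : Equiv.Perm (Fin (p + 1)), ((Equiv.Perm.sign ρ : ℤ) : ℝ) *
        ∏ i : Fin (p + 1), A (blockPerm p 1 τ 1 i) (ρ i)
      = ((Equiv.Perm.sign τ : ℤ) : ℝ) * A.det := by
    intro τ
    have h1 : ∑ ρ : Equiv.Perm (Fin (p + 1)), ((Equiv.Perm.sign ρ : ℤ) : ℝ) *
        ∏ i : Fin (p + 1), A (blockPerm p 1 τ 1 i) (ρ i)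
        = (A.submatrix (blockPerm p 1 τ 1) id).det := (detC _).symm
    rw [h1, Matrix.det_permute, sign_blockPerm]
    simp
  calc ∑ τ : Equiv.Perm (Fin p), ∑ ρ : Equiv.Perm (Fin (p + 1)),
        ((Equiv.Perm.sign ρ : ℤ) : ℝ) * ((Equiv.Perm.sign τ : ℤ) : ℝ) *
          ((∏ i : Fin p, A (Fin.castAdd 1 (τ i)) (ρ (Fin.castAdd 1 i))) *
            A (Fin.natAdd p 0) (ρ (Fin.natAdd p 0)))
      = ∑ τ : Equiv.Perm (Fin p), ((Equiv.Perm.sign τ : ℤ) : ℝ) *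
          ∑ ρ : Equiv.Perm (Fin (p + 1)), ((Equiv.Perm.sign ρ : ℤ) : ℝ) *
            ∏ i : Fin (p + 1), A (blockPerm p 1 τ 1 i) (ρ i) := by
        refine Finset.sum_congr rfl fun τ _ => ?_
        rw [Finset.mul_sum]
        refine Finset.sum_congr rfl fun ρ _ => ?_
        rw [← step2 τ ρ]
        ring
    _ = ∑ τ : Equiv.Perm (Fin p), ((Equiv.Perm.sign τ : ℤ) : ℝ) *
          (((Equiv.Perm.sign τ : ℤ) : ℝ) * A.det) := by
        refine Finset.sum_congr rfl fun τ _ => ?_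
        rw [step3]
    _ = ∑ _τ : Equiv.Perm (Fin p), A.det := by
        refine Finset.sum_congr rfl fun τ _ => ?_
        rw [← mul_assoc, sgn_mul_self, one_mul]
    _ = (p.factorial : ℝ) * A.det := by
        rw [Finset.sum_const, Finset.card_univ, Fintype.card_perm, Fintype.card_fin,
          nsmul_eq_mul]



lemma gpow_eq_det : ∀ (p : ℕ) (u v : Fin p → V),
    gpow p u v = (p.factorial : ℝ) * (Matrix.of fun i j => (inner ℝ (u i) (v j) : ℝ)).det := by
  intro p
  induction p with
  | zero =>
    intro u v
    simp [gpow, Matrix.det_isEmpty]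
  | succ p ih =>
    intro u v
    have hgoal : gpow (p + 1) u v = KN p 1 p 1 (gpow p) gD u v := rfl
    rw [hgoal]
    simp only [KN, gD, ih]
    have hσ : ∀ σ : Equiv.Perm (Fin (p + 1)),
        ∑ ρ : Equiv.Perm (Fin (p + 1)),
          ((Equiv.Perm.sign σ : ℤ) : ℝ) * ((Equiv.Perm.sign ρ : ℤ) : ℝ) *
            (((p.factorial : ℝ) *
              (Matrix.of fun i j =>
                (inner ℝ (u (σ (Fin.castAdd 1 i))) (v (ρ (Fin.castAdd 1 j))) : ℝ)).det) *
              (inner ℝ (u (σ (Fin.natAdd p 0))) (v (ρ (Fin.natAdd p 0))) : ℝ))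
        = ((Equiv.Perm.sign σ : ℤ) : ℝ) * ((Equiv.Perm.sign σ : ℤ) : ℝ) *
            ((p.factorial : ℝ) * (p.factorial : ℝ) *
              (Matrix.of fun i j => (inner ℝ (u i) (v j) : ℝ)).det) := by
      intro σ
      have hsub := sum_perm_det_mul p (Matrix.of fun i j => (inner ℝ (u (σ i)) (v j) : ℝ))
      calc ∑ ρ : Equiv.Perm (Fin (p + 1)),
            ((Equiv.Perm.sign σ : ℤ) : ℝ) * ((Equiv.Perm.sign ρ : ℤ) : ℝ) *
              (((p.factorial : ℝ) *
                (Matrix.of fun i j =>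
                  (inner ℝ (u (σ (Fin.castAdd 1 i))) (v (ρ (Fin.castAdd 1 j))) : ℝ)).det) *
                (inner ℝ (u (σ (Fin.natAdd p 0))) (v (ρ (Fin.natAdd p 0))) : ℝ))
          = (((Equiv.Perm.sign σ : ℤ) : ℝ) * (p.factorial : ℝ)) *
              ∑ ρ : Equiv.Perm (Fin (p + 1)), ((Equiv.Perm.sign ρ : ℤ) : ℝ) *
                (((Matrix.of fun i j : Fin p =>
                    (Matrix.of fun i' j' => (inner ℝ (u (σ i')) (v j') : ℝ))
                      (Fin.castAdd 1 i) (ρ (Fin.castAdd 1 j))).det) *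
                  (Matrix.of fun i' j' => (inner ℝ (u (σ i')) (v j') : ℝ))
                    (Fin.natAdd p 0) (ρ (Fin.natAdd p 0))) := by
            rw [Finset.mul_sum]
            refine Finset.sum_congr rfl fun ρ _ => ?_
            simp only [Matrix.of_apply]
            ring
        _ = (((Equiv.Perm.sign σ : ℤ) : ℝ) * (p.factorial : ℝ)) *
              ((p.factorial : ℝ) *
                (Matrix.of fun i j => (inner ℝ (u (σ i)) (v j) : ℝ)).det) := by rw [hsub]
        _ = ((Equiv.Perm.sign σ : ℤ) : ℝ) * ((Equiv.Perm.sign σ : ℤ) : ℝ) *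
              ((p.factorial : ℝ) * (p.factorial : ℝ) *
                (Matrix.of fun i j => (inner ℝ (u i) (v j) : ℝ)).det) := by
            have hperm : (Matrix.of fun i j => (inner ℝ (u (σ i)) (v j) : ℝ)).det
                = ((Equiv.Perm.sign σ : ℤ) : ℝ) *
                  (Matrix.of fun i j => (inner ℝ (u i) (v j) : ℝ)).det :=
              Matrix.det_permute σ (Matrix.of fun i j => (inner ℝ (u i) (v j) : ℝ))
            rw [hperm]
            ring
    rw [Finset.sum_congr rfl fun σ _ => hσ σ]
    have : ∀ σ : Equiv.Perm (Fin (p + 1)),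
        ((Equiv.Perm.sign σ : ℤ) : ℝ) * ((Equiv.Perm.sign σ : ℤ) : ℝ) *
          ((p.factorial : ℝ) * (p.factorial : ℝ) *
            (Matrix.of fun i j => (inner ℝ (u i) (v j) : ℝ)).det)
        = (p.factorial : ℝ) * (p.factorial : ℝ) *
            (Matrix.of fun i j => (inner ℝ (u i) (v j) : ℝ)).det := fun σ => by
      rw [sgn_mul_self, one_mul]
    rw [Finset.sum_congr rfl fun σ _ => this σ, Finset.sum_const, Finset.card_univ,
      Fintype.card_perm, Fintype.card_fin, nsmul_eq_mul]
    have h0 : (p.factorial : ℝ) ≠ 0 := Nat.cast_ne_zero.mpr (Nat.factorial_ne_zero p)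
    rw [Nat.factorial_succ]
    push_cast [Nat.factorial_one]
    field_simp
    ring

lemma rawDF_comp_perm {r : ℕ} (ω : DF V r r) (u : Fin r → V) (π : Equiv.Perm (Fin r)) :
    rawDF ω (u ∘ π) (u ∘ π) = rawDF ω u u := by
  unfold rawDF
  rw [AlternatingMap.map_perm ω u π, AlternatingMap.smul_apply,
    AlternatingMap.map_perm (ω u) u π, smul_smul, Int.units_mul_self, one_smul]

lemma rawDF_perm_right {r : ℕ} (ω : DF V r r) (u : Fin r → V) (π : Equiv.Perm (Fin r)) :
    rawDF ω u (u ∘ π) = ((Equiv.Perm.sign π : ℤ) : ℝ) * rawDF ω u u := by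
  unfold rawDF
  rw [AlternatingMap.map_perm (ω u) u π, Units.smul_def, zsmul_eq_mul]

lemma key_inner (p r : ℕ) (ω : DF V r r) (x : Fin (p + r) → V)
    (hinner : ∀ a b, (inner ℝ (x a) (x b) : ℝ) = if a = b then 1 else 0)
    (σ : Equiv.Perm (Fin (p + r))) :
    ∑ ρ : Equiv.Perm (Fin (p + r)),
      ((Equiv.Perm.sign σ : ℤ) : ℝ) * ((Equiv.Perm.sign ρ : ℤ) : ℝ) *
        (gpow p (fun a => x (σ (Fin.castAdd r a))) (fun c => x (ρ (Fin.castAdd r c))) *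
          rawDF ω (fun a => x (σ (Fin.natAdd p a))) (fun c => x (ρ (Fin.natAdd p c))))
      = (p.factorial : ℝ) * (p.factorial : ℝ) * (r.factorial : ℝ) *
          rawDF ω (fun a => x (σ (Fin.natAdd p a))) (fun a => x (σ (Fin.natAdd p a))) := by
  classical
  rw [← Equiv.sum_comp (Equiv.mulLeft σ)]
  have hstep : ∀ μ : Equiv.Perm (Fin (p + r)),
      ((Equiv.Perm.sign σ : ℤ) : ℝ) * ((Equiv.Perm.sign ((Equiv.mulLeft σ) μ) : ℤ) : ℝ) *
        (gpow p (fun a => x (σ (Fin.castAdd r a)))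
            (fun c => x (((Equiv.mulLeft σ) μ) (Fin.castAdd r c))) *
          rawDF ω (fun a => x (σ (Fin.natAdd p a)))
            (fun c => x (((Equiv.mulLeft σ) μ) (Fin.natAdd p c))))
      = ((Equiv.Perm.sign μ : ℤ) : ℝ) *
          ((p.factorial : ℝ) *
            (Matrix.of fun i j : Fin p =>
              if Fin.castAdd r i = μ (Fin.castAdd r j) then (1 : ℝ) else 0).det *
            rawDF ω (fun a => x (σ (Fin.natAdd p a)))
              (fun c => x (σ (μ (Fin.natAdd p c))))) := by
    intro μ
    have hmulapp : ∀ a, ((Equiv.mulLeft σ) μ) a = σ (μ a) := fun a => rfl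
    simp only [hmulapp]
    have hsign : ((Equiv.Perm.sign ((Equiv.mulLeft σ) μ) : ℤ) : ℝ)
        = ((Equiv.Perm.sign σ : ℤ) : ℝ) * ((Equiv.Perm.sign μ : ℤ) : ℝ) := by
      show ((Equiv.Perm.sign (σ * μ) : ℤ) : ℝ) = _
      rw [Equiv.Perm.sign_mul]
      push_cast
      ring
    rw [hsign, gpow_eq_det]
    have hmat : (Matrix.of fun i j =>
          (inner ℝ (x (σ (Fin.castAdd r i))) (x (σ (μ (Fin.castAdd r j)))) : ℝ))
        = Matrix.of fun i j : Fin p =>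
            if Fin.castAdd r i = μ (Fin.castAdd r j) then (1 : ℝ) else 0 := by
      ext i j
      simp only [Matrix.of_apply, hinner, EmbeddingLike.apply_eq_iff_eq]
    rw [hmat]
    have hs := sgn_mul_self σ
    set d := (Matrix.of fun i j : Fin p =>
      if Fin.castAdd r i = μ (Fin.castAdd r j) then (1 : ℝ) else 0).det with hd
    set t := rawDF ω (fun a => x (σ (Fin.natAdd p a)))
      (fun c => x (σ (μ (Fin.natAdd p c)))) with ht
    linear_combination (((Equiv.Perm.sign μ : ℤ) : ℝ) * (p.factorial : ℝ) * d * t) * hs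
  rw [Finset.sum_congr rfl fun μ _ => hstep μ]
  -- restrict to block permutations
  have hvan : ∀ μ ∈ (Finset.univ : Finset (Equiv.Perm (Fin (p + r)))),
      μ ∉ Finset.image (fun ab : Equiv.Perm (Fin p) × Equiv.Perm (Fin r) =>
          blockPerm p r ab.1 ab.2) Finset.univ →
      ((Equiv.Perm.sign μ : ℤ) : ℝ) *
          ((p.factorial : ℝ) *
            (Matrix.of fun i j : Fin p =>
              if Fin.castAdd r i = μ (Fin.castAdd r j) then (1 : ℝ) else 0).det *
            rawDF ω (fun a => x (σ (Fin.natAdd p a)))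
              (fun c => x (σ (μ (Fin.natAdd p c))))) = 0 := by
    intro μ _ hμ
    have hnb : ¬ ∀ j : Fin p, ∃ i, μ (Fin.castAdd r j) = Fin.castAdd r i := by
      intro hall
      obtain ⟨ab, hab⟩ := exists_blockPerm_of_mapsTo_castAdd μ hall
      exact hμ (Finset.mem_image.mpr ⟨ab, Finset.mem_univ _, hab.symm⟩)
    push_neg at hnb
    obtain ⟨j, hj⟩ := hnb
    have hdet : (Matrix.of fun i j : Fin p =>
        if Fin.castAdd r i = μ (Fin.castAdd r j) then (1 : ℝ) else 0).det = 0 := by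
      apply Matrix.det_eq_zero_of_column_eq_zero j
      intro i
      simp only [Matrix.of_apply]
      exact if_neg fun h => hj i h.symm
    rw [hdet]
    ring
  rw [← Finset.sum_subset (Finset.subset_univ _) hvan,
    Finset.sum_image fun a _ b _ h => blockPerm_injective p r h]
  have hterm : ∀ ab : Equiv.Perm (Fin p) × Equiv.Perm (Fin r),
      ((Equiv.Perm.sign (blockPerm p r ab.1 ab.2) : ℤ) : ℝ) *
          ((p.factorial : ℝ) *
            (Matrix.of fun i j : Fin p =>
              if Fin.castAdd r i = blockPerm p r ab.1 ab.2 (Fin.castAdd r j) then (1 : ℝ)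
              else 0).det *
            rawDF ω (fun a => x (σ (Fin.natAdd p a)))
              (fun c => x (σ (blockPerm p r ab.1 ab.2 (Fin.natAdd p c)))))
      = (p.factorial : ℝ) *
          rawDF ω (fun a => x (σ (Fin.natAdd p a))) (fun a => x (σ (Fin.natAdd p a))) := by
    rintro ⟨a, b⟩
    have hsg : ((Equiv.Perm.sign (blockPerm p r a b) : ℤ) : ℝ)
        = ((Equiv.Perm.sign a : ℤ) : ℝ) * ((Equiv.Perm.sign b : ℤ) : ℝ) := by
      rw [sign_blockPerm]; push_cast; ring
    have hW : rawDF ω (fun a' => x (σ (Fin.natAdd p a')))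
          (fun c => x (σ (blockPerm p r a b (Fin.natAdd p c))))
        = ((Equiv.Perm.sign b : ℤ) : ℝ) *
            rawDF ω (fun a' => x (σ (Fin.natAdd p a'))) (fun a' => x (σ (Fin.natAdd p a'))) := by
      have harg : (fun c => x (σ (blockPerm p r a b (Fin.natAdd p c))))
          = (fun a' => x (σ (Fin.natAdd p a'))) ∘ b := by
        funext c
        simp [blockPerm_natAdd]
      rw [harg]
      exact rawDF_perm_right ω _ b
    rw [hsg, det_indicator_blockPerm, hW]
    have ha := sgn_mul_self a
    have hb := sgn_mul_self b
    calc ((Equiv.Perm.sign a : ℤ) : ℝ) * ((Equiv.Perm.sign b : ℤ) : ℝ) *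
          ((p.factorial : ℝ) * ((Equiv.Perm.sign a : ℤ) : ℝ) *
            (((Equiv.Perm.sign b : ℤ) : ℝ) *
              rawDF ω (fun a' => x (σ (Fin.natAdd p a'))) (fun a' => x (σ (Fin.natAdd p a')))))
        = (((Equiv.Perm.sign a : ℤ) : ℝ) * ((Equiv.Perm.sign a : ℤ) : ℝ)) *
            ((((Equiv.Perm.sign b : ℤ) : ℝ) * ((Equiv.Perm.sign b : ℤ) : ℝ))) *
            ((p.factorial : ℝ) *
              rawDF ω (fun a' => x (σ (Fin.natAdd p a'))) (fun a' => x (σ (Fin.natAdd p a')))) := by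
          ring
      _ = _ := by rw [ha, hb]; ring
  rw [Finset.sum_congr rfl fun ab _ => hterm ab, Finset.sum_const, Finset.card_univ,
    Fintype.card_prod, Fintype.card_perm, Fintype.card_perm, Fintype.card_fin, Fintype.card_fin,
    nsmul_eq_mul]
  push_cast
  ring

/-- the sorted tuple associated to the `natAdd`-part of a permutation. -/
noncomputable def kmap (p r : ℕ) (σ : Equiv.Perm (Fin (p + r))) :
    {f : Fin r → Fin (p + r) // StrictMono f} :=
  ⟨(fun a => σ (Fin.natAdd p a)) ∘ Tuple.sort (fun a => σ (Fin.natAdd p a)), by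
    have hinj : Function.Injective
        ((fun a => σ (Fin.natAdd p a)) ∘ Tuple.sort (fun a => σ (Fin.natAdd p a))) :=
      Function.Injective.comp (fun a b h => natAdd_inj (σ.injective h))
        (Tuple.sort _).injective
    exact (Tuple.monotone_sort _).strictMono_of_injective hinj⟩

lemma kmap_range (p r : ℕ) (σ : Equiv.Perm (Fin (p + r))) :
    Set.range (kmap p r σ).1 = Set.range (fun a => σ (Fin.natAdd p a)) :=
  Function.Surjective.range_comp (Tuple.sort (fun a => σ (Fin.natAdd p a))).surjective
    (fun a => σ (Fin.natAdd p a))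

lemma kmap_eq_iff (p r : ℕ) (σ : Equiv.Perm (Fin (p + r)))
    (I : {f : Fin r → Fin (p + r) // StrictMono f}) :
    kmap p r σ = I ↔ Set.range (fun a => σ (Fin.natAdd p a)) = Set.range I.1 := by
  constructor
  · rintro rfl
    exact (kmap_range p r σ).symm
  · intro h
    apply Subtype.ext
    have h1 : Set.range (kmap p r σ).1 = Set.range I.1 := by
      rw [kmap_range p r σ]; exact h
    haveI : WellFoundedLT (Fin r) := inferInstance
    exact ((kmap p r σ).2.range_inj I.2).mp h1

lemma extcard (p r : ℕ) (I : {f : Fin r → Fin (p + r) // StrictMono f}) :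
    ((Finset.image I.1 Finset.univ)ᶜ).card = p := by
  rw [Finset.card_compl, Finset.card_image_of_injective _ I.2.injective]
  simp only [Finset.card_univ, Fintype.card_fin]
  omega

/-- Extend a strictly monotone `r`-tuple to a permutation of `Fin (p + r)`, enumerating the
complement on the `castAdd` side. -/
noncomputable def extPerm (p r : ℕ) (I : {f : Fin r → Fin (p + r) // StrictMono f}) :
    Equiv.Perm (Fin (p + r)) :=
  Equiv.ofBijective
    (fun c => Sum.elim
      (fun i => (((Finset.image I.1 Finset.univ)ᶜ).orderIsoOfFin (extcard p r I) i : Fin (p + r)))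
      I.1 (finSumFinEquiv.symm c))
    (by
      rw [← Finite.injective_iff_bijective]
      apply Function.Injective.comp (g := Sum.elim _ I.1)
      · rintro (i | i) (j | j) h
        · simp only [Sum.elim_inl] at h
          have := (((Finset.image I.1 Finset.univ)ᶜ).orderIsoOfFin
            (extcard p r I)).injective (Subtype.ext h)
          rw [this]
        · exfalso
          simp only [Sum.elim_inl, Sum.elim_inr] at h
          have h1 : (((((Finset.image I.1 Finset.univ)ᶜ).orderIsoOfFin (extcard p r I)) i) :
              Fin (p + r)) ∈ (Finset.image I.1 Finset.univ)ᶜ :=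
            ((((Finset.image I.1 Finset.univ)ᶜ).orderIsoOfFin (extcard p r I)) i).2
          rw [h] at h1
          exact (Finset.mem_compl.mp h1) (Finset.mem_image_of_mem _ (Finset.mem_univ j))
        · exfalso
          simp only [Sum.elim_inl, Sum.elim_inr] at h
          have h1 : (((((Finset.image I.1 Finset.univ)ᶜ).orderIsoOfFin (extcard p r I)) j) :
              Fin (p + r)) ∈ (Finset.image I.1 Finset.univ)ᶜ :=
            ((((Finset.image I.1 Finset.univ)ᶜ).orderIsoOfFin (extcard p r I)) j).2
          rw [← h] at h1
          exact (Finset.mem_compl.mp h1) (Finset.mem_image_of_mem _ (Finset.mem_univ i))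
        · simp only [Sum.elim_inr] at h
          rw [I.2.injective h]
      · exact finSumFinEquiv.symm.injective)

lemma extPerm_natAdd (p r : ℕ) (I : {f : Fin r → Fin (p + r) // StrictMono f}) (j : Fin r) :
    extPerm p r I (Fin.natAdd p j) = I.1 j := by
  show Sum.elim _ I.1 (finSumFinEquiv.symm (Fin.natAdd p j)) = I.1 j
  rw [← finSumFinEquiv_apply_right, Equiv.symm_apply_apply]
  rfl

lemma fiber_eq (p r : ℕ) (I : {f : Fin r → Fin (p + r) // StrictMono f}) :
    Finset.filter (fun σ : Equiv.Perm (Fin (p + r)) => kmap p r σ = I) Finset.univ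
      = Finset.image (fun ab : Equiv.Perm (Fin p) × Equiv.Perm (Fin r) =>
          extPerm p r I * blockPerm p r ab.1 ab.2) Finset.univ := by
  ext σ
  simp only [Finset.mem_filter, Finset.mem_univ, true_and, Finset.mem_image]
  constructor
  · intro hk
    have hr := (kmap_eq_iff p r σ I).mp hk
    have hmaps : ∀ j : Fin r, ∃ j', ((extPerm p r I)⁻¹ * σ) (Fin.natAdd p j) = Fin.natAdd p j' := by
      intro j
      have : σ (Fin.natAdd p j) ∈ Set.range I.1 := by
        rw [← hr]; exact ⟨j, rfl⟩
      obtain ⟨j', hj'⟩ := this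
      refine ⟨j', ?_⟩
      rw [Equiv.Perm.mul_apply, ← hj', ← extPerm_natAdd p r I j', Equiv.Perm.coe_inv, Equiv.symm_apply_apply]
    obtain ⟨ab, hab⟩ := exists_blockPerm_of_mapsTo_natAdd _ hmaps
    refine ⟨ab, ?_⟩
    rw [← hab, mul_inv_cancel_left]
  · rintro ⟨ab, rfl⟩
    rw [kmap_eq_iff]
    have hfun : (fun a => (extPerm p r I * blockPerm p r ab.1 ab.2) (Fin.natAdd p a))
        = I.1 ∘ ab.2 := by
      funext a
      rw [Equiv.Perm.mul_apply, blockPerm_natAdd, extPerm_natAdd]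
      rfl
    rw [hfun]
    exact Function.Surjective.range_comp ab.2.surjective I.1

lemma fiber_card (p r : ℕ) (I : {f : Fin r → Fin (p + r) // StrictMono f}) :
    (Finset.filter (fun σ : Equiv.Perm (Fin (p + r)) => kmap p r σ = I) Finset.univ).card
      = p.factorial * r.factorial := by
  rw [fiber_eq, Finset.card_image_of_injective _
    (fun ab ab' h => blockPerm_injective p r (mul_left_cancel h)),
    Finset.card_univ, Fintype.card_prod, Fintype.card_perm, Fintype.card_perm,
    Fintype.card_fin, Fintype.card_fin]

lemma sum_perm_alt (p r : ℕ) (ω : DF V r r) (x : Fin (p + r) → V) :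
    ∑ σ : Equiv.Perm (Fin (p + r)),
        rawDF ω (fun a => x (σ (Fin.natAdd p a))) (fun a => x (σ (Fin.natAdd p a)))
      = ((p.factorial : ℝ) * (r.factorial : ℝ)) *
          ∑ I : {f : Fin r → Fin (p + r) // StrictMono f},
            rawDF ω (fun a => x (I.1 a)) (fun a => x (I.1 a)) := by
  classical
  rw [← Finset.sum_fiberwise Finset.univ (kmap p r)
    (fun σ => rawDF ω (fun a => x (σ (Fin.natAdd p a))) (fun a => x (σ (Fin.natAdd p a)))),
    Finset.mul_sum]
  refine Finset.sum_congr rfl fun I _ => ?_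
  have hconst : ∀ σ ∈ Finset.filter (fun σ : Equiv.Perm (Fin (p + r)) => kmap p r σ = I)
      Finset.univ,
      rawDF ω (fun a => x (σ (Fin.natAdd p a))) (fun a => x (σ (Fin.natAdd p a)))
        = rawDF ω (fun a => x (I.1 a)) (fun a => x (I.1 a)) := by
    intro σ hσ
    have hk : kmap p r σ = I := (Finset.mem_filter.mp hσ).2
    have hI : I.1 = (fun a => σ (Fin.natAdd p a)) ∘ Tuple.sort (fun a => σ (Fin.natAdd p a)) := by
      rw [← hk]; rfl
    set s := Tuple.sort (fun a => σ (Fin.natAdd p a)) with hs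
    have h2 : (fun a => x (σ (Fin.natAdd p a))) = (fun a => x (I.1 a)) ∘ s.symm := by
      funext a
      simp only [Function.comp_apply, hI, Equiv.apply_symm_apply]
    rw [h2]
    have := rawDF_comp_perm ω (fun a => x (I.1 a)) (s.symm : Equiv.Perm (Fin r))
    exact this
  rw [Finset.sum_congr rfl hconst, Finset.sum_const, fiber_card, nsmul_eq_mul]
  push_cast
  ring


variable (V)

/-- For a symmetric `(r,r)`-double form `ω`, `p + r ≤ n` and orthonormal
vectors `e₁,…,e_{p+r}`:
`(g^p·ω)(e₁∧…∧e_{p+r}, e₁∧…∧e_{p+r}) = p! Σ_{i₁<…<i_r} ω(e_{i₁}∧…∧e_{i_r}, e_{i₁}∧…∧e_{i_r})`. -/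
theorem gpow_KN_sectional [FiniteDimensional ℝ V] (n : ℕ)
    (hn : Module.finrank ℝ V = n)
    (r : ℕ) (ω : DF V r r) (hsym : Symm r (rawDF ω))
    (p : ℕ) (hpr : p + r ≤ n)
    (x : Fin (p + r) → V) (hx : Orthonormal ℝ x) :
    KN p r p r (gpow p) (rawDF ω) x x =
      (p.factorial : ℝ) *
        ∑ I : {f : Fin r → Fin (p + r) // StrictMono f},
          rawDF ω (fun a => x (I.1 a)) (fun a => x (I.1 a)) := by
  classical
  have hinner : ∀ a b, (inner ℝ (x a) (x b) : ℝ) = if a = b then 1 else 0 :=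
    orthonormal_iff_ite.mp hx
  simp only [KN]
  rw [Finset.sum_congr rfl fun σ _ => key_inner p r ω x hinner σ, ← Finset.mul_sum,
    sum_perm_alt p r ω x]
  have h0p : (p.factorial : ℝ) ≠ 0 := Nat.cast_ne_zero.mpr (Nat.factorial_ne_zero p)
  have h0r : (r.factorial : ℝ) ≠ 0 := Nat.cast_ne_zero.mpr (Nat.factorial_ne_zero r)
  push_cast
  field_simp


end Weitzenbock
end
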